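/- arXiv:2104.01453 — 5 statements merged into one kernel-verified Lean document; each statement's English description precedes it below -/
import Mathlib

section
/- Let f(x) be a nonconstant polynomial with integer coefficients, let k ≥ 2 and c be integers. Then for every positive integer n, 𝒩_{k,f,c}(n) = n^{k-1} · ∏_{p | n} (1 − 𝓜_{k,f,c}(p)/p^{k-1}), where the product runs over all prime divisors p of n. -/
open Polynomial

/-- `Ncount k f c n` is the number of tuples `(x_1,...,x_k) ∈ {0,...,n-1}^k` with
`gcd(f(x_i), n) = 1` for all `i` and `x_1 + ... + x_k ≡ c (mod n)`. -/
noncomputable def Ncount (k : ℕ) (f : Polynomial ℤ) (c : ℤ) (n : ℕ) : ℕ :=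
  Nat.card {x : Fin k → ℤ //
    (∀ i, 0 ≤ x i ∧ x i < n) ∧
    (∀ i, Int.gcd (f.eval (x i)) n = 1) ∧
    (n : ℤ) ∣ (∑ i, x i) - c}

/-- `Mcount k f c p` is the number of tuples `(x_1,...,x_{k-1}) ∈ {0,...,p-1}^{k-1}` with
`f(x_1) ⋯ f(x_{k-1}) · f(c - x_1 - ... - x_{k-1}) ≡ 0 (mod p)`. -/
noncomputable def Mcount (k : ℕ) (f : Polynomial ℤ) (c : ℤ) (p : ℕ) : ℕ :=
  Nat.card {x : Fin (k - 1) → ℤ //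
    (∀ i, 0 ≤ x i ∧ x i < p) ∧
    (p : ℤ) ∣ (∏ i, f.eval (x i)) * f.eval (c - ∑ i, x i)}

/-! ### Auxiliary machinery -/

section Aux

variable (f : Polynomial ℤ) (c : ℤ)

/-- Count of solutions in an abstract commutative ring. -/
noncomputable def cnt (k : ℕ) (R : Type) [CommRing R] : ℕ :=
  Nat.card {x : Fin k → R // (∀ i, IsUnit (aeval (x i) f)) ∧ ∑ i, x i = (c : R)}

/-- The "all units" condition on a `(k-1)`-tuple. -/
def Phi (m : ℕ) (R : Type) [CommRing R] (y : Fin m → R) : Prop :=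
  (∀ i, IsUnit (aeval (y i) f)) ∧ IsUnit (aeval ((c : R) - ∑ i, y i) f)

/-- Integer representatives in `[0,n)` biject with `ZMod n`, respecting any predicate. -/
def intTupleEquiv (n : ℕ) [NeZero n] (m : ℕ) (P : (Fin m → ZMod n) → Prop) :
    {x : Fin m → ℤ // (∀ i, 0 ≤ x i ∧ x i < n) ∧ P (fun i => ((x i : ZMod n)))} ≃
    {y : Fin m → ZMod n // P y} where
  toFun x := ⟨fun i => ((x.1 i : ZMod n)), x.2.2⟩
  invFun y := ⟨fun i => ((y.1 i).val : ℤ), by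
    have key : ∀ a : ZMod n, (((a.val : ℤ)) : ZMod n) = a := by
      intro a; push_cast; simp [ZMod.natCast_val, ZMod.cast_id]
    refine ⟨fun i => ⟨Int.ofNat_nonneg _, ?_⟩, ?_⟩
    · show ((y.1 i).val : ℤ) < n
      exact_mod_cast (y.1 i).val_lt
    have h : (fun i => ((((y.1 i).val : ℤ)) : ZMod n)) = y.1 := funext fun i => key _
    rw [h]; exact y.2⟩
  left_inv x := by
    apply Subtype.ext
    funext i
    obtain ⟨h0, h1⟩ := x.2.1 i
    obtain ⟨b, hb⟩ : ∃ b : ℕ, x.1 i = (b : ℤ) := ⟨(x.1 i).toNat, (Int.toNat_of_nonneg h0).symm⟩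
    show (((x.1 i : ZMod n)).val : ℤ) = x.1 i
    have hblt : b < n := by rw [hb] at h1; exact_mod_cast h1
    rw [hb, Int.cast_natCast, ZMod.val_cast_of_lt hblt]
  right_inv y := by
    apply Subtype.ext
    funext i
    push_cast
    simp [ZMod.natCast_val, ZMod.cast_id]

lemma isUnit_intCast_iff (n : ℕ) (a : ℤ) :
    IsUnit ((a : ZMod n)) ↔ Int.gcd a n = 1 := by
  have hgcd : Int.gcd a n = Nat.gcd a.natAbs n := by
    simp [Int.gcd]
  rw [hgcd]
  rcases Int.natAbs_eq a with h | h
  · conv_lhs => rw [h]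
    rw [Int.cast_natCast, ZMod.isUnit_iff_coprime]
  · conv_lhs => rw [h]
    rw [Int.cast_neg, Int.cast_natCast, IsUnit.neg_iff, ZMod.isUnit_iff_coprime]

lemma aeval_intCast' (R : Type) [CommRing R] (a : ℤ) :
    aeval ((a : R)) f = ((f.eval a : ℤ) : R) := by
  have := aeval_algebraMap_apply_eq_algebraMap_eval (A := R) a f
  simpa [algebraMap_int_eq] using this

lemma aeval_ringHom_comm {R S : Type} [CommRing R] [CommRing S] (g : R →+* S) (a : R) :
    aeval (g a) f = g (aeval a f) :=
  aeval_algHom_apply g.toIntAlgHom a f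

lemma Ncount_eq_cnt (k n : ℕ) (hn : 0 < n) :
    Ncount k f c n = cnt f c k (ZMod n) := by
  haveI : NeZero n := ⟨hn.ne'⟩
  refine Nat.card_congr ?_
  refine (Equiv.subtypeEquivRight ?_).trans
    (intTupleEquiv n k (fun y => (∀ i, IsUnit (aeval (y i) f)) ∧ ∑ i, y i = (c : ZMod n)))
  intro x
  constructor
  · rintro ⟨hb, hg, hd⟩
    refine ⟨hb, fun i => ?_, ?_⟩
    · rw [aeval_intCast', isUnit_intCast_iff]
      exact hg i
    · have : (((∑ i, x i) - c : ℤ) : ZMod n) = 0 := by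
        rw [ZMod.intCast_zmod_eq_zero_iff_dvd]; exact hd
      push_cast at this
      linear_combination this
  · rintro ⟨hb, ⟨hu, hs⟩⟩
    refine ⟨hb, fun i => ?_, ?_⟩
    · rw [← isUnit_intCast_iff, ← aeval_intCast' f]
      exact hu i
    · rw [← ZMod.intCast_zmod_eq_zero_iff_dvd]
      push_cast
      linear_combination hs

lemma Mcount_eq (k p : ℕ) (hp : p.Prime) :
    Mcount k f c p = Nat.card {y : Fin (k-1) → ZMod p // ¬ Phi f c (k-1) (ZMod p) y} := by
  haveI : Fact p.Prime := ⟨hp⟩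
  refine Nat.card_congr ?_
  refine (Equiv.subtypeEquivRight ?_).trans
    (intTupleEquiv p (k-1) (fun y => ¬ Phi f c (k-1) (ZMod p) y))
  intro x
  constructor
  · rintro ⟨hb, hd⟩
    refine ⟨hb, ?_⟩
    rw [← ZMod.intCast_zmod_eq_zero_iff_dvd] at hd
    push_cast at hd
    rw [Phi]
    simp only [not_and_or, not_forall]
    rw [mul_eq_zero] at hd
    rcases hd with hd | hd
    · left
      rw [Finset.prod_eq_zero_iff] at hd
      obtain ⟨i, _, hi⟩ := hd
      refine ⟨i, ?_⟩
      rw [aeval_intCast', isUnit_iff_ne_zero, not_ne_iff]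
      exact hi
    · right
      have : ((c - ∑ i, x i : ℤ) : ZMod p) = (c : ZMod p) - ∑ i, ((x i : ZMod p)) := by
        push_cast; ring
      rw [isUnit_iff_ne_zero, not_ne_iff, ← this, aeval_intCast']
      exact hd
  · rintro ⟨hb, hphi⟩
    refine ⟨hb, ?_⟩
    rw [← ZMod.intCast_zmod_eq_zero_iff_dvd]
    push_cast
    rw [Phi, not_and_or] at hphi
    rcases hphi with hphi | hphi
    · rw [not_forall] at hphi
      obtain ⟨i, hi⟩ := hphi
      apply mul_eq_zero_of_left
      apply Finset.prod_eq_zero (Finset.mem_univ i)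
      rw [aeval_intCast', isUnit_iff_ne_zero, not_ne_iff] at hi
      exact hi
    · apply mul_eq_zero_of_right
      have hcast : ((c - ∑ i, x i : ℤ) : ZMod p) = (c : ZMod p) - ∑ i, ((x i : ZMod p)) := by
        push_cast; ring
      rw [← hcast, aeval_intCast', isUnit_iff_ne_zero, not_ne_iff] at hphi
      exact hphi

lemma isUnit_prod_iff' {M N : Type} [CommMonoid M] [CommMonoid N] {w : M × N} :
    IsUnit w ↔ IsUnit w.1 ∧ IsUnit w.2 := by
  constructor
  · intro h
    exact ⟨h.map (MonoidHom.fst M N), h.map (MonoidHom.snd M N)⟩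
  · rintro ⟨h1, h2⟩
    obtain ⟨a, ha⟩ := isUnit_iff_exists_inv.mp h1
    obtain ⟨b, hb⟩ := isUnit_iff_exists_inv.mp h2
    exact isUnit_iff_exists_inv.mpr ⟨(a, b), by simp [Prod.ext_iff, ha, hb]⟩

lemma cnt_succ (m : ℕ) (R : Type) [CommRing R] :
    cnt f c (m+1) R = Nat.card {y : Fin m → R // Phi f c m R y} := by
  have hup : ∀ x : Fin (m+1) → R, (∑ i, x i = (c : R)) →
      x (Fin.last m) = (c : R) - ∑ i, Fin.init x i := by
    intro x hx
    rw [← hx, Fin.sum_univ_castSucc]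
    simp only [Fin.init]
    ring
  refine Nat.card_congr (Equiv.mk
    (fun x => ⟨Fin.init x.1, by
      obtain ⟨hu, hs⟩ := x.2
      refine ⟨fun i => hu i.castSucc, ?_⟩
      rw [← hup x.1 hs]
      exact hu (Fin.last m)⟩)
    (fun y => ⟨Fin.snoc y.1 ((c : R) - ∑ i, y.1 i), by
      obtain ⟨hu, hl⟩ := y.2
      constructor
      · intro i
        refine Fin.lastCases ?_ ?_ i
        · rw [Fin.snoc_last]; exact hl
        · intro j; rw [Fin.snoc_castSucc]; exact hu j
      · rw [Fin.sum_univ_castSucc]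
        simp only [Fin.snoc_castSucc, Fin.snoc_last]
        ring⟩)
    ?_ ?_)
  · intro x
    apply Subtype.ext
    simp only
    rw [show ((c:R) - ∑ i, Fin.init x.1 i) = x.1 (Fin.last m) from (hup x.1 x.2.2).symm]
    exact Fin.snoc_init_self x.1
  · intro y
    apply Subtype.ext
    simp only
    exact Fin.init_snoc _ _

lemma card_not (A : Type) [Fintype A] (P : A → Prop) :
    Nat.card {a // ¬ P a} = Fintype.card A - Nat.card {a // P a} := by
  classical
  rw [Nat.card_eq_fintype_card, Nat.card_eq_fintype_card, Fintype.card_subtype_compl]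

lemma card_le' (A : Type) [Fintype A] (P : A → Prop) :
    Nat.card {a // P a} ≤ Fintype.card A := by
  classical
  rw [Nat.card_eq_fintype_card]
  exact Fintype.card_subtype_le _

lemma card_comp {A B : Type} [Fintype A] [Fintype B] (g : A → B) (d : ℕ)
    (hg : ∀ b, Nat.card {a // g a = b} = d) (Φ : B → Prop) :
    Nat.card {a // Φ (g a)} = d * Nat.card {b // Φ b} := by
  classical
  rw [Nat.card_eq_fintype_card, Nat.card_eq_fintype_card, Fintype.card_subtype,
    Fintype.card_subtype]
  rw [Finset.card_eq_sum_card_fiberwise (f := g) (t := Finset.univ.filter Φ)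
    (fun x hx => by
      simp only [Finset.mem_coe, Finset.mem_filter, Finset.mem_univ, true_and] at hx ⊢
      exact hx)]
  have key : ∀ b ∈ Finset.univ.filter Φ,
      ((Finset.univ.filter fun a => Φ (g a)).filter fun a => g a = b).card = d := by
    intro b hb
    have hΦb : Φ b := (Finset.mem_filter.mp hb).2
    have hfil : ((Finset.univ.filter fun a => Φ (g a)).filter fun a => g a = b)
        = Finset.univ.filter fun a => g a = b := by
      ext a
      simp only [Finset.mem_filter, Finset.mem_univ, true_and]
      exact ⟨fun h => h.2, fun h => ⟨by rw [h]; exact hΦb, h⟩⟩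
    rw [hfil, ← Fintype.card_subtype, ← Nat.card_eq_fintype_card]
    exact hg b
  rw [Finset.sum_congr rfl key, Finset.sum_const, smul_eq_mul, mul_comm]

section PrimePow

variable (p α : ℕ)

lemma isUnit_cast_iff (hp : p.Prime) (hα : 0 < α) (u : ZMod (p^α)) :
    IsUnit (ZMod.castHom (dvd_pow_self p hα.ne') (ZMod p) u) ↔ IsUnit u := by
  haveI : NeZero (p^α) := ⟨pow_ne_zero _ hp.pos.ne'⟩
  have h1 : (ZMod.castHom (dvd_pow_self p hα.ne') (ZMod p)) u = ((u.val : ZMod p)) := by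
    rw [ZMod.castHom_apply, ← ZMod.natCast_val]
  have h2 : u = ((u.val : ZMod (p^α))) := by rw [ZMod.natCast_val, ZMod.cast_id]
  rw [h1, ZMod.isUnit_iff_coprime]
  conv_rhs => rw [h2]
  rw [ZMod.isUnit_iff_coprime]
  exact (Nat.coprime_pow_right_iff hα _ _).symm

lemma card_fiber (hp : p.Prime) (hα : 0 < α) (b : ZMod p) :
    Nat.card {a : ZMod (p^α) // ZMod.castHom (dvd_pow_self p hα.ne') (ZMod p) a = b}
      = p^(α-1) := by
  haveI : NeZero (p^α) := ⟨pow_ne_zero _ hp.pos.ne'⟩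
  haveI : NeZero p := ⟨hp.pos.ne'⟩
  classical
  set π := ZMod.castHom (dvd_pow_self p hα.ne') (ZMod p) with hπ
  have hsur : ∀ b : ZMod p, π ((b.val : ZMod (p^α))) = b := by
    intro b
    rw [map_natCast, ZMod.natCast_val, ZMod.cast_id]
  have hE : ∀ b : ZMod p, Nat.card {a : ZMod (p^α) // π a = b}
      = Nat.card {a : ZMod (p^α) // π a = 0} := by
    intro b
    refine Nat.card_congr ⟨fun a => ⟨a.1 - ((b.val : ZMod (p^α))), by
        rw [map_sub, a.2, hsur, sub_self]⟩,
      fun a => ⟨a.1 + ((b.val : ZMod (p^α))), by rw [map_add, a.2, hsur, zero_add]⟩,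
      fun a => by apply Subtype.ext; simp,
      fun a => by apply Subtype.ext; simp⟩
  have h1 : ∑ b : ZMod p, Nat.card {a : ZMod (p^α) // π a = b} = p^α := by
    have hc := Fintype.card_congr (Equiv.sigmaFiberEquiv π)
    rw [Fintype.card_sigma] at hc
    simp only [Nat.card_eq_fintype_card]
    rw [hc, ZMod.card]
  have htot : p * Nat.card {a : ZMod (p^α) // π a = 0} = p^α := by
    calc p * Nat.card {a : ZMod (p^α) // π a = 0}
        = ∑ _b : ZMod p, Nat.card {a : ZMod (p^α) // π a = 0} := by
          rw [Finset.sum_const, Finset.card_univ, ZMod.card, smul_eq_mul]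
      _ = ∑ b : ZMod p, Nat.card {a : ZMod (p^α) // π a = b} :=
          (Finset.sum_congr rfl fun b _ => hE b).symm
      _ = p^α := h1
  have hpow : p^α = p * p^(α-1) := by
    conv_lhs => rw [show α = (α - 1) + 1 by omega]
    rw [pow_succ']
  have hfin : Nat.card {a : ZMod (p^α) // π a = 0} = p^(α-1) :=
    Nat.eq_of_mul_eq_mul_left hp.pos (htot.trans hpow)
  rw [hE b, hfin]

lemma card_tuple_fiber (hp : p.Prime) (hα : 0 < α) (m : ℕ) (z : Fin m → ZMod p) :
    Nat.card {y : Fin m → ZMod (p^α) //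
      (fun i => ZMod.castHom (dvd_pow_self p hα.ne') (ZMod p) (y i)) = z}
      = p^((α-1)*m) := by
  have e1 : {y : Fin m → ZMod (p^α) //
        (fun i => ZMod.castHom (dvd_pow_self p hα.ne') (ZMod p) (y i)) = z} ≃
      {y : Fin m → ZMod (p^α) //
        ∀ i, ZMod.castHom (dvd_pow_self p hα.ne') (ZMod p) (y i) = z i} :=
    Equiv.subtypeEquivRight (fun y => funext_iff)
  rw [Nat.card_congr (e1.trans (Equiv.subtypePiEquivPi
    (p := fun (i : Fin m) (a : ZMod (p^α)) =>
      ZMod.castHom (dvd_pow_self p hα.ne') (ZMod p) a = z i))), Nat.card_pi]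
  rw [Finset.prod_congr rfl fun i _ => card_fiber p α hp hα (z i), Finset.prod_const,
    Finset.card_univ, Fintype.card_fin, ← pow_mul]

set_option maxHeartbeats 1000000 in
lemma cnt_prime_pow (hp : p.Prime) (hα : 0 < α) (m : ℕ) :
    cnt f c (m+1) (ZMod (p^α))
      = p^((α-1)*m) * Nat.card {z : Fin m → ZMod p // Phi f c m (ZMod p) z} := by
  haveI : NeZero (p^α) := ⟨pow_ne_zero _ hp.pos.ne'⟩
  haveI : NeZero p := ⟨hp.pos.ne'⟩
  rw [cnt_succ]
  have haev : ∀ a : ZMod (p^α),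
      aeval (ZMod.castHom (dvd_pow_self p hα.ne') (ZMod p) a) f
        = ZMod.castHom (dvd_pow_self p hα.ne') (ZMod p) (aeval a f) :=
    fun a => aeval_ringHom_comm f (ZMod.castHom (dvd_pow_self p hα.ne') (ZMod p)) a
  have key : ∀ y : Fin m → ZMod (p^α),
      Phi f c m (ZMod (p^α)) y ↔
        Phi f c m (ZMod p) (fun i => ZMod.castHom (dvd_pow_self p hα.ne') (ZMod p) (y i)) := by
    intro y
    unfold Phi
    have h1 : ∀ i, IsUnit (aeval (y i) f) ↔
        IsUnit (aeval (ZMod.castHom (dvd_pow_self p hα.ne') (ZMod p) (y i)) f) := by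
      intro i
      rw [haev]
      exact (isUnit_cast_iff p α hp hα _).symm
    have h2 : IsUnit (aeval ((c : ZMod (p^α)) - ∑ i, y i) f) ↔
        IsUnit (aeval ((c : ZMod p)
          - ∑ i, ZMod.castHom (dvd_pow_self p hα.ne') (ZMod p) (y i)) f) := by
      have hπ : ((c : ZMod p) - ∑ i, ZMod.castHom (dvd_pow_self p hα.ne') (ZMod p) (y i))
          = ZMod.castHom (dvd_pow_self p hα.ne') (ZMod p) ((c : ZMod (p^α)) - ∑ i, y i) := by
        rw [map_sub, map_intCast, map_sum]
      rw [hπ, haev]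
      exact (isUnit_cast_iff p α hp hα _).symm
    exact and_congr (forall_congr' h1) h2
  rw [Nat.card_congr (Equiv.subtypeEquivRight key)]
  exact card_comp (fun (y : Fin m → ZMod (p^α)) (i : Fin m) =>
      ZMod.castHom (dvd_pow_self p hα.ne') (ZMod p) (y i))
    (p^((α-1)*m)) (fun z => card_tuple_fiber p α hp hα m z) (Phi f c m (ZMod p))

end PrimePow

lemma cnt_congr (k : ℕ) {R S : Type} [CommRing R] [CommRing S] (e : R ≃+* S) :
    cnt f c k R = cnt f c k S := by
  have haev : ∀ a : R, aeval (e a) f = e (aeval a f) := fun a =>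
    aeval_ringHom_comm f e.toRingHom a
  refine Nat.card_congr (Equiv.subtypeEquiv (Equiv.piCongrRight fun _ => e.toEquiv) ?_)
  intro x
  show ((∀ i, IsUnit (aeval (x i) f)) ∧ ∑ i, x i = (c : R)) ↔
    ((∀ i, IsUnit (aeval (e (x i)) f)) ∧ ∑ i, e (x i) = (c : S))
  constructor
  · rintro ⟨hu, hs⟩
    refine ⟨fun i => ?_, ?_⟩
    · rw [haev]
      exact (hu i).map e.toRingHom
    · rw [← map_sum, hs, map_intCast]
  · rintro ⟨hu, hs⟩
    refine ⟨fun i => ?_, ?_⟩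
    · have h := (hu i)
      rw [haev] at h
      have h2 := h.map e.symm.toRingHom
      simpa using h2
    · rw [← map_sum] at hs
      have h2 := congrArg e.symm hs
      simpa using h2

lemma cnt_prod (k : ℕ) (R S : Type) [CommRing R] [CommRing S] :
    cnt f c k (R × S) = cnt f c k R * cnt f c k S := by
  rw [cnt, cnt, cnt, ← Nat.card_prod]
  refine Nat.card_congr ?_
  refine (Equiv.subtypeEquiv (Equiv.arrowProdEquivProdArrow (Fin k) (fun _ => R) (fun _ => S)) ?_).trans
    (Equiv.subtypeProdEquivProd)
  intro x
  show ((∀ i, IsUnit (aeval (x i) f)) ∧ ∑ i, x i = (c : R × S)) ↔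
    ((∀ i, IsUnit (aeval ((x i).1) f)) ∧ ∑ i, (x i).1 = (c : R)) ∧
    ((∀ i, IsUnit (aeval ((x i).2) f)) ∧ ∑ i, (x i).2 = (c : S))
  have haevp : ∀ w : R × S, (aeval w f) = (aeval w.1 f, aeval w.2 f) := by
    intro w
    have h1 := aeval_algHom_apply (AlgHom.fst ℤ R S) w f
    have h2 := aeval_algHom_apply (AlgHom.snd ℤ R S) w f
    exact Prod.ext h1.symm h2.symm
  have hsum : (∑ i, x i = (c : R × S)) ↔ (∑ i, (x i).1 = (c : R) ∧ ∑ i, (x i).2 = (c : S)) := by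
    rw [Prod.ext_iff, Prod.fst_sum, Prod.snd_sum]
    have hc1 : ((c : R × S)).1 = (c : R) := by
      have := map_intCast (RingHom.fst R S) c
      simpa using this
    have hc2 : ((c : R × S)).2 = (c : S) := by
      have := map_intCast (RingHom.snd R S) c
      simpa using this
    rw [hc1, hc2]
  have hunit : ∀ i, IsUnit (aeval (x i) f) ↔
      (IsUnit (aeval ((x i).1) f) ∧ IsUnit (aeval ((x i).2) f)) := by
    intro i
    rw [haevp, isUnit_prod_iff']
  rw [hsum, forall_congr' hunit, forall_and]
  tauto

lemma cnt_one (k : ℕ) : cnt f c k (ZMod 1) = 1 := by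
  rw [cnt]
  have h : ∀ x : Fin k → ZMod 1, (∀ i, IsUnit (aeval (x i) f)) ∧ ∑ i, x i = (c : ZMod 1) :=
    fun x => ⟨fun i => isUnit_of_subsingleton _, Subsingleton.elim _ _⟩
  rw [Nat.card_congr (Equiv.subtypeUnivEquiv h), Nat.card_pi]
  simp

lemma card_phi (k p : ℕ) (hp : p.Prime) :
    Nat.card {z : Fin (k-1) → ZMod p // Phi f c (k-1) (ZMod p) z}
      = p^(k-1) - Mcount k f c p ∧ Mcount k f c p ≤ p^(k-1) := by
  haveI : NeZero p := ⟨hp.pos.ne'⟩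
  have htot : Fintype.card (Fin (k-1) → ZMod p) = p^(k-1) := by
    simp [ZMod.card]
  have hM := Mcount_eq f c k p hp
  have hcompl := card_not (Fin (k-1) → ZMod p) (Phi f c (k-1) (ZMod p))
  have hle := card_le' (Fin (k-1) → ZMod p) (Phi f c (k-1) (ZMod p))
  rw [htot] at hcompl hle
  constructor
  · omega
  · omega

lemma Ncount_prime_pow (k : ℕ) (hk : 1 ≤ k) (p α : ℕ) (hp : p.Prime) (hα : 0 < α) :
    Ncount k f c (p^α) = p^((α-1)*(k-1)) * (p^(k-1) - Mcount k f c p) := by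
  obtain ⟨m, rfl⟩ : ∃ m, k = m + 1 := ⟨k-1, by omega⟩
  simp only [Nat.add_sub_cancel]
  rw [Ncount_eq_cnt f c (m+1) (p^α) (pow_pos hp.pos α), cnt_prime_pow f c p α hp hα m]
  obtain ⟨hphi, _⟩ := card_phi f c (m+1) p hp
  simp only [Nat.add_sub_cancel] at hphi
  exact congrArg (fun t => p ^ ((α - 1) * m) * t) hphi

lemma Mcount_le (k p : ℕ) (hp : p.Prime) : Mcount k f c p ≤ p^(k-1) :=
  (card_phi f c k p hp).2

lemma Ncount_mul (k a b : ℕ) (ha : 0 < a) (hb : 0 < b) (hab : a.Coprime b) :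
    Ncount k f c (a*b) = Ncount k f c a * Ncount k f c b := by
  rw [Ncount_eq_cnt f c k _ (mul_pos ha hb), Ncount_eq_cnt f c k a ha,
    Ncount_eq_cnt f c k b hb, cnt_congr f c k (ZMod.chineseRemainder hab), cnt_prod]

lemma Ncount_one' (k : ℕ) : Ncount k f c 1 = 1 := by
  rw [Ncount_eq_cnt f c k 1 one_pos, cnt_one]

end Aux

theorem Ncount_formula (f : Polynomial ℤ) (hf : 1 ≤ f.natDegree)
    (k : ℕ) (hk : 2 ≤ k) (c : ℤ) (n : ℕ) (hn : 0 < n) :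
    (Ncount k f c n : ℚ) =
      (n : ℚ) ^ (k - 1) *
        ∏ p ∈ n.primeFactors, (1 - (Mcount k f c p : ℚ) / (p : ℚ) ^ (k - 1)) := by
  clear hf
  revert hn
  induction n using Nat.recOnPosPrimePosCoprime with
  | prime_pow p α hpp hα =>
    intro _
    have hp' : p.Prime := hpp
    rw [Ncount_prime_pow f c k (by omega) p α hp' hα]
    have hM : Mcount k f c p ≤ p^(k-1) := Mcount_le f c k p hp'
    rw [Nat.primeFactors_pow p hα.ne', Nat.Prime.primeFactors hp', Finset.prod_singleton]
    have hp0 : (0:ℚ) < (p:ℚ) := by exact_mod_cast hp'.pos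
    have hpk : ((p:ℚ))^(k-1) ≠ 0 := by positivity
    have e1 : ((p:ℚ)^α)^(k-1) = (p:ℚ)^((α-1)*(k-1)) * (p:ℚ)^(k-1) := by
      rw [← pow_mul, ← pow_add]
      congr 1
      have hα1 : α = (α-1) + 1 := by omega
      calc α * (k-1) = ((α-1)+1)*(k-1) := by rw [← hα1]
        _ = (α-1)*(k-1) + (k-1) := by ring
    push_cast [Nat.cast_sub hM]
    rw [e1]
    field_simp
  | zero => exact fun h => absurd h (lt_irrefl 0)
  | one =>
    intro _
    rw [Ncount_one' f c k]
    simp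
  | coprime a b ha1 hb1 hab IHa IHb =>
    intro _
    have ha : 0 < a := by omega
    have hb : 0 < b := by omega
    rw [Ncount_mul f c k a b ha hb hab]
    push_cast
    rw [IHa ha, IHb hb, Nat.Coprime.primeFactors_mul hab,
      Finset.prod_union (Nat.Coprime.disjoint_primeFactors hab)]
    push_cast
    ring
end

section
/- Let c and n be integers with n ≥ 1, let k ≥ 2 be an integer, and let f(x) = (a_1 x − a_2)(b_1 x − b_2) with a_1, a_2, b_1, b_2 ∈ ℤ and gcd(a_1, n) = gcd(b_1, n) = gcd(a_1 b_2 − a_2 b_1, n) = 1. Then 𝒩_{k,f,c}(n) = (−1)^{kω(n)} · ∏_{p | n} p^{kν_p(n) − ν_p(n) − k} · ( p · Σ_{0 ≤ j ≤ k, (a_2 b_1 − a_1 b_2) j ≡ a_1 b_1 c − a_1 b_2 k (mod p)} C(k, j) + (2 − p)^k − 2^k ), where the product runs over prime divisors p of n. -/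
open Polynomial

open Finset

noncomputable def preimageEquiv {M N : Type*} [AddCommGroup M] [AddCommGroup N] (φ : M →+ N)
    (hs : Function.Surjective φ) (P : N → Prop) :
    {x : M // P (φ x)} ≃ {y : N // P y} × {z : M // φ z = 0} where
  toFun x := (⟨φ x.1, x.2⟩, ⟨x.1 - Function.surjInv hs (φ x.1), by
    simp [map_sub, Function.surjInv_eq hs]⟩)
  invFun yz := ⟨Function.surjInv hs yz.1.1 + yz.2.1, by
    simpa [map_add, Function.surjInv_eq hs, yz.2.2] using yz.1.2⟩
  left_inv x := by ext; simp
  right_inv yz := by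
    ext
    · simp [map_add, Function.surjInv_eq hs, yz.2.2]
    · simp [map_add, Function.surjInv_eq hs, yz.2.2]

lemma card_preimage {M N : Type*} [AddCommGroup M] [AddCommGroup N] (φ : M →+ N)
    (hs : Function.Surjective φ) (P : N → Prop) :
    Nat.card {x : M // P (φ x)} = Nat.card {y : N // P y} * Nat.card {z : M // φ z = 0} := by
  rw [Nat.card_congr (preimageEquiv φ hs P), Nat.card_prod]

lemma natCardSigma {ι : Type*} [Fintype ι] (f : ι → Type*) [∀ i, Finite (f i)] :
    Nat.card (Σ i, f i) = ∑ i, Nat.card (f i) := by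
  classical
  letI : ∀ i, Fintype (f i) := fun i => Fintype.ofFinite (f i)
  simp [Nat.card_eq_fintype_card]

/-- number of k-tuples with all entries satisfying U and sum c -/
noncomputable def cntFull {R : Type*} [AddCommGroup R] (k : ℕ) (U : R → Prop) (c : R) : ℕ :=
  Nat.card {x : Fin k → R // (∀ i, U (x i)) ∧ ∑ i, x i = c}

noncomputable def cntRed {R : Type*} [AddCommGroup R] (m : ℕ) (U : R → Prop) (c : R) : ℕ :=
  Nat.card {y : Fin m → R // (∀ i, U (y i)) ∧ U (c - ∑ i, y i)}

def tailEquiv {R : Type*} [AddCommGroup R] (m : ℕ) (U : R → Prop) (c : R) :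
    {x : Fin (m+1) → R // (∀ i, U (x i)) ∧ ∑ i, x i = c} ≃
      {y : Fin m → R // (∀ i, U (y i)) ∧ U (c - ∑ i, y i)} where
  toFun x := ⟨Fin.tail x.1, fun i => x.2.1 i.succ, by
    have h := x.2.2
    rw [Fin.sum_univ_succ] at h
    have h2 : c - ∑ i, Fin.tail x.1 i = x.1 0 := sub_eq_iff_eq_add.mpr h.symm
    simpa only [h2] using x.2.1 0⟩
  invFun y := ⟨Fin.cons (c - ∑ i, y.1 i) y.1, by
    constructor
    · intro i
      refine Fin.cases ?_ ?_ i
      · simpa using y.2.2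
      · intro j; simpa using y.2.1 j
    · rw [Fin.sum_univ_succ]
      simp⟩
  left_inv x := by
    ext i
    refine Fin.cases ?_ ?_ i
    · have h := x.2.2
      rw [Fin.sum_univ_succ] at h
      simp only [Fin.cons_zero]
      exact sub_eq_iff_eq_add.mpr h.symm
    · intro j; simp [Fin.tail]
  right_inv y := by
    ext i
    simp [Fin.tail]

lemma cntFull_succ {R : Type*} [AddCommGroup R] (m : ℕ) (U : R → Prop) (c : R) :
    cntFull (m+1) U c = cntRed m U c :=
  Nat.card_congr (tailEquiv m U c)

lemma cntRed_lift {R S : Type*} [CommRing R] [CommRing S]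
    (φ : R →+* S) (hs : Function.Surjective φ) (m : ℕ)
    (U : R → Prop) (V : S → Prop) (hUV : ∀ z, U z ↔ V (φ z)) (c : R) :
    cntRed m U c = cntRed m V (φ c) * (Nat.card {z : R // φ z = 0}) ^ m := by
  classical
  have hΦ : Function.Surjective (φ.toAddMonoidHom.compLeft (Fin m)) := fun y =>
    ⟨fun i => (hs (y i)).choose, funext fun i => (hs (y i)).choose_spec⟩
  have key := card_preimage (φ.toAddMonoidHom.compLeft (Fin m)) hΦ
    (fun y => (∀ i, V (y i)) ∧ V (φ c - ∑ i, y i))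
  rw [cntRed, cntRed]
  have h1 : ∀ x : Fin m → R,
      ((∀ i, U (x i)) ∧ U (c - ∑ i, x i)) ↔
      ((∀ i, V ((φ.toAddMonoidHom.compLeft (Fin m)) x i)) ∧
        V (φ c - ∑ i, (φ.toAddMonoidHom.compLeft (Fin m)) x i)) := by
    intro x
    have h2 : ∀ i, (φ.toAddMonoidHom.compLeft (Fin m)) x i = φ (x i) := fun i => rfl
    simp only [h2]
    rw [← map_sum, ← map_sub]
    exact and_congr (forall_congr' fun i => hUV _) (hUV _)
  rw [Nat.card_congr (Equiv.subtypeEquivRight h1), key]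
  congr 1
  rw [Nat.card_congr (Equiv.subtypeEquivRight (q := fun x : Fin m → R => ∀ i, φ (x i) = 0)
    (fun x => by constructor <;> intro h <;> [exact fun i => congrFun h i; exact funext h]))]
  rw [Nat.card_congr (Equiv.subtypePiEquivPi (p := fun (_ : Fin m) (z : R) => φ z = 0)), Nat.card_pi]
  simp [Finset.prod_const]

section PrimeLevel

variable {p : ℕ} [NeZero p] (r1 r2 : ZMod p)

noncomputable def pcnt (m : ℕ) (c : ZMod p) : ℕ :=
  cntFull m (fun z => z ≠ r1 ∧ z ≠ r2) c

noncomputable def Wb (m : ℕ) (c : ZMod p) : ℕ :=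
  ∑ j ∈ range (m+1),
    if (j : ZMod p) * r1 + ((m - j : ℕ) : ZMod p) * r2 = c then m.choose j else 0

lemma pcnt_zero (c : ZMod p) : pcnt r1 r2 0 c = if c = 0 then 1 else 0 := by
  rw [pcnt, cntFull]
  rw [Nat.card_congr (Equiv.subtypeEquivRight
    (q := fun _ : Fin 0 → ZMod p => c = 0) (fun x => by simp [eq_comm]))]
  split_ifs with h
  · subst h
    exact Nat.card_eq_one_iff_unique.mpr ⟨⟨fun a b => by ext i; exact i.elim0⟩,
      ⟨⟨fun i => i.elim0, rfl⟩⟩⟩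
  · haveI : IsEmpty {_x : Fin 0 → ZMod p // c = 0} := ⟨fun x => h x.2⟩
    exact Nat.card_of_isEmpty

lemma pcnt_succ (m : ℕ) (c : ZMod p) :
    pcnt r1 r2 (m+1) c =
      ∑ a : ZMod p, if a ≠ r1 ∧ a ≠ r2 then pcnt r1 r2 m (c - a) else 0 := by
  classical
  rw [pcnt, cntFull]
  have e1 : {x : Fin (m+1) → ZMod p // (∀ i, x i ≠ r1 ∧ x i ≠ r2) ∧ ∑ i, x i = c} ≃
      Σ a : ZMod p, {y : Fin m → ZMod p //
        (a ≠ r1 ∧ a ≠ r2) ∧ ((∀ i, y i ≠ r1 ∧ y i ≠ r2) ∧ ∑ i, y i = c - a)} := by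
    refine (Equiv.subtypeEquiv (Fin.consEquiv (fun _ : Fin (m+1) => ZMod p)).symm ?_).trans
      (Equiv.subtypeProdEquivSigmaSubtype
        (fun (a : ZMod p) (y : Fin m → ZMod p) => (a ≠ r1 ∧ a ≠ r2) ∧ ((∀ i, y i ≠ r1 ∧ y i ≠ r2) ∧ ∑ i, y i = c - a)))
    intro x
    have he : (Fin.consEquiv (fun _ : Fin (m+1) => ZMod p)).symm x = (x 0, Fin.tail x) := rfl
    rw [he, Fin.sum_univ_succ]
    simp only [Fin.forall_fin_succ, Fin.tail]
    constructor
    · rintro ⟨⟨h0, hs⟩, hsum⟩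
      exact ⟨h0, hs, by rw [← hsum]; ring⟩
    · rintro ⟨h0, hs, hsum⟩
      exact ⟨⟨h0, hs⟩, by rw [hsum]; ring⟩
  rw [Nat.card_congr e1, natCardSigma]
  refine Finset.sum_congr rfl fun a _ => ?_
  split_ifs with h
  · rw [pcnt, cntFull]
    exact Nat.card_congr (Equiv.subtypeEquivRight (fun y => and_iff_right h))
  · haveI : IsEmpty {y : Fin m → ZMod p //
        (a ≠ r1 ∧ a ≠ r2) ∧ ((∀ i, y i ≠ r1 ∧ y i ≠ r2) ∧ ∑ i, y i = c - a)} :=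
      ⟨fun y => h y.2.1⟩
    exact Nat.card_of_isEmpty

lemma pcnt_total [Fact p.Prime] (hne : r1 ≠ r2) (m : ℕ) :
    ∑ c : ZMod p, pcnt r1 r2 m c = (p - 2) ^ m := by
  classical
  induction m with
  | zero => simp [pcnt_zero, Finset.sum_ite_eq' Finset.univ (0 : ZMod p) (fun _ => 1)]
  | succ m ih =>
    simp only [pcnt_succ]
    rw [Finset.sum_comm]
    have h1 : ∀ a : ZMod p, ∑ c : ZMod p,
        (if a ≠ r1 ∧ a ≠ r2 then pcnt r1 r2 m (c - a) else 0) =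
        if a ≠ r1 ∧ a ≠ r2 then (p-2)^m else 0 := by
      intro a
      split_ifs with h
      · rw [← ih]
        exact Fintype.sum_equiv (Equiv.subRight a) _ _ (fun c => rfl)
      · simp
    rw [Finset.sum_congr rfl (fun a _ => h1 a), Finset.sum_ite, Finset.sum_const,
      Finset.sum_const, smul_eq_mul, smul_eq_mul, mul_zero, add_zero]
    have h2 : (Finset.univ.filter (fun a : ZMod p => a ≠ r1 ∧ a ≠ r2)).card = p - 2 := by
      have : Finset.univ.filter (fun a : ZMod p => a ≠ r1 ∧ a ≠ r2) =
          Finset.univ \ {r1, r2} := by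
        ext a; simp [Finset.mem_sdiff, and_comm]
      rw [this, Finset.card_sdiff_of_subset (Finset.subset_univ _), Finset.card_pair hne,
        Finset.card_univ, ZMod.card]
    rw [h2, pow_succ]
    ring

lemma Wb_succ (m : ℕ) (c : ZMod p) :
    Wb r1 r2 (m+1) c = Wb r1 r2 m (c - r1) + Wb r1 r2 m (c - r2) := by
  classical
  have key2 : Wb r1 r2 m (c - r2) = ∑ j ∈ range (m+2),
      (if (j : ZMod p) * r1 + ((m + 1 - j : ℕ) : ZMod p) * r2 = c then m.choose j else 0) := by
    rw [Finset.sum_range_succ]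
    have hlast : (if ((m+1 : ℕ) : ZMod p) * r1 + ((m + 1 - (m+1) : ℕ) : ZMod p) * r2 = c
        then m.choose (m+1) else 0) = 0 := by
      simp [Nat.choose_succ_self]
    rw [hlast, add_zero, Wb]
    refine Finset.sum_congr rfl fun j hj => ?_
    have hj' : j ≤ m := Nat.lt_succ_iff.mp (Finset.mem_range.mp hj)
    have hms : (m + 1 - j : ℕ) = (m - j) + 1 := by omega
    have : ((j : ZMod p) * r1 + ((m - j : ℕ) : ZMod p) * r2 = c - r2) ↔
        ((j : ZMod p) * r1 + ((m + 1 - j : ℕ) : ZMod p) * r2 = c) := by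
      rw [hms]
      push_cast
      constructor
      · intro h; rw [add_mul, one_mul, ← add_assoc, h]; ring
      · intro h; rw [eq_sub_iff_add_eq, ← h]; ring
    rw [if_congr this rfl rfl]
  have hterm : ∀ i ∈ range (m+1),
      (if ((i+1 : ℕ) : ZMod p) * r1 + ((m + 1 - (i+1) : ℕ) : ZMod p) * r2 = c
        then (m+1).choose (i+1) else 0) =
      (if ((i : ℕ) : ZMod p) * r1 + ((m - i : ℕ) : ZMod p) * r2 = c - r1
        then m.choose i else 0) +
      (if ((i+1 : ℕ) : ZMod p) * r1 + ((m + 1 - (i+1) : ℕ) : ZMod p) * r2 = c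
        then m.choose (i+1) else 0) := by
    intro i hi
    have hsub : (m + 1 - (i+1) : ℕ) = m - i := by omega
    have hiff : (((i+1 : ℕ) : ZMod p) * r1 + ((m + 1 - (i+1) : ℕ) : ZMod p) * r2 = c) ↔
        (((i : ℕ) : ZMod p) * r1 + ((m - i : ℕ) : ZMod p) * r2 = c - r1) := by
      rw [hsub]
      push_cast
      constructor
      · intro h; rw [eq_sub_iff_add_eq, ← h]; ring
      · intro h; rw [add_mul, one_mul]
        rw [eq_sub_iff_add_eq] at h
        rw [← h]; ring
    rw [Nat.choose_succ_succ]
    split_ifs with h1 h2 h3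
    · rfl
    · exact absurd (hiff.mp h1) h2
    · exact absurd (hiff.mpr h3) h1
    · rfl
  have hWr1 : ∑ i ∈ range (m+1),
      (if ((i : ℕ) : ZMod p) * r1 + ((m - i : ℕ) : ZMod p) * r2 = c - r1
        then m.choose i else 0) = Wb r1 r2 m (c - r1) := rfl
  rw [Finset.sum_range_succ'] at key2
  rw [Wb, Finset.sum_range_succ', Finset.sum_congr rfl hterm, Finset.sum_add_distrib,
    hWr1, key2, add_assoc]
  norm_num

lemma pcnt_formula [Fact p.Prime] (hne : r1 ≠ r2) (m : ℕ) (c : ZMod p) :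
    (pcnt r1 r2 m c : ℚ) =
      (((p:ℚ) - 2)^m - (-2)^m)/(p:ℚ) + (-1)^m * (Wb r1 r2 m c : ℚ) := by
  classical
  have hp0 : (p:ℚ) ≠ 0 := Nat.cast_ne_zero.mpr (Fact.out (p := p.Prime)).pos.ne'
  induction m generalizing c with
  | zero =>
    rw [pcnt_zero]
    have hW0 : Wb r1 r2 0 c = if c = 0 then 1 else 0 := by
      rw [Wb, Finset.sum_range_succ, Finset.sum_range_zero, zero_add]
      simp [eq_comm]
    rw [hW0]
    split_ifs <;> norm_num
  | succ m ih =>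
    rw [pcnt_succ]
    have hsplit : ∀ a : ZMod p,
        ((if a ≠ r1 ∧ a ≠ r2 then pcnt r1 r2 m (c - a) else 0 : ℕ) : ℚ) =
        (pcnt r1 r2 m (c-a) : ℚ) - (if a = r1 then (pcnt r1 r2 m (c-a) : ℚ) else 0)
          - (if a = r2 then (pcnt r1 r2 m (c-a) : ℚ) else 0) := by
      intro a
      by_cases h1 : a = r1 <;> by_cases h2 : a = r2 <;> simp_all
    rw [Nat.cast_sum, Finset.sum_congr rfl (fun a _ => hsplit a),
      Finset.sum_sub_distrib, Finset.sum_sub_distrib,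
      Finset.sum_ite_eq' Finset.univ r1 (fun a => (pcnt r1 r2 m (c-a) : ℚ)),
      Finset.sum_ite_eq' Finset.univ r2 (fun a => (pcnt r1 r2 m (c-a) : ℚ)),
      if_pos (Finset.mem_univ r1), if_pos (Finset.mem_univ r2)]
    have hWsum : ∑ a : ZMod p, (Wb r1 r2 m (c - a) : ℚ) = 2^m := by
      have expand : ∀ a : ZMod p, (Wb r1 r2 m (c - a) : ℚ) =
          ∑ j ∈ range (m+1), (if (j : ZMod p) * r1 + ((m - j : ℕ) : ZMod p) * r2 = c - a
            then (m.choose j : ℚ) else 0) := by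
        intro a
        rw [Wb]
        push_cast
        rfl
      rw [Finset.sum_congr rfl (fun a _ => expand a), Finset.sum_comm]
      have inner : ∀ j ∈ range (m+1), (∑ a : ZMod p,
          if (j : ZMod p) * r1 + ((m - j : ℕ) : ZMod p) * r2 = c - a
            then (m.choose j : ℚ) else 0) = (m.choose j : ℚ) := by
        intro j _
        have hiff : ∀ a : ZMod p,
            ((j : ZMod p) * r1 + ((m - j : ℕ) : ZMod p) * r2 = c - a) ↔
            (a = c - ((j : ZMod p) * r1 + ((m - j : ℕ) : ZMod p) * r2)) := by
          intro a
          constructor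
          · intro h; rw [h, sub_sub_cancel]
          · intro h; rw [h, sub_sub_cancel]
        rw [Finset.sum_congr rfl (fun a _ => if_congr (hiff a) rfl rfl),
          Finset.sum_ite_eq' Finset.univ _ (fun _ => (m.choose j : ℚ)),
          if_pos (Finset.mem_univ _)]
      rw [Finset.sum_congr rfl inner]
      rw [← Nat.cast_sum, Nat.sum_range_choose]
      push_cast
      ring
    have hIH : ∑ a : ZMod p, (pcnt r1 r2 m (c - a) : ℚ) =
        (p:ℚ) * ((((p:ℚ) - 2)^m - (-2)^m)/(p:ℚ)) + (-1)^m * 2^m := by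
      rw [Finset.sum_congr rfl (fun a _ => ih (c - a)), Finset.sum_add_distrib,
        Finset.sum_const, ← Finset.mul_sum, Finset.card_univ, ZMod.card, hWsum]
      push_cast
      ring
    rw [hIH, ih (c - r1), ih (c - r2)]
    have hW : (Wb r1 r2 (m+1) c : ℚ) = (Wb r1 r2 m (c - r1) : ℚ) + (Wb r1 r2 m (c - r2) : ℚ) := by
      rw [Wb_succ]; push_cast; ring
    rw [hW]
    have h22 : ((-1:ℚ))^m * 2^m = (-2:ℚ)^m := by rw [← mul_pow]; norm_num
    field_simp
    linear_combination (p:ℚ) * h22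

end PrimeLevel

lemma prodIsUnit {α β : Type*} [Monoid α] [Monoid β] (u : α × β) :
    IsUnit u ↔ IsUnit u.1 ∧ IsUnit u.2 := by
  constructor
  · intro h; exact ⟨h.map (MonoidHom.fst α β), h.map (MonoidHom.snd α β)⟩
  · rintro ⟨⟨v, hv⟩, ⟨w, hw⟩⟩
    exact ⟨⟨(v.val, w.val), (v.inv, w.inv), by ext <;> simp, by ext <;> simp⟩,
      by ext <;> simp [hv, hw]⟩

lemma unit_lift {p r : ℕ} (hp : p.Prime) (hr : r ≠ 0) (w : ZMod (p^r)) :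
    IsUnit w ↔ IsUnit (ZMod.castHom (dvd_pow_self p hr) (ZMod p) w) := by
  haveI : Fact p.Prime := ⟨hp⟩
  haveI : NeZero (p^r) := ⟨pow_ne_zero r hp.pos.ne'⟩
  have h1 : w = ((w.val : ℕ) : ZMod (p^r)) := (ZMod.natCast_rightInverse w).symm
  rw [ZMod.castHom_apply, ← ZMod.natCast_val]
  rw [ZMod.isUnit_iff_coprime]
  conv_lhs => rw [h1]
  rw [ZMod.isUnit_iff_coprime]
  exact Nat.coprime_pow_right_iff (Nat.pos_of_ne_zero hr) _ _

lemma castHom_surj {p r : ℕ} (hp : p.Prime) (hr : r ≠ 0) :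
    Function.Surjective (ZMod.castHom (dvd_pow_self p hr) (ZMod p)) := by
  haveI : Fact p.Prime := ⟨hp⟩
  intro y
  exact ⟨((y.val : ℕ) : ZMod (p^r)), by
    rw [map_natCast]
    exact ZMod.natCast_rightInverse y⟩

lemma castHom_ker_card {p r : ℕ} (hp : p.Prime) (hr : r ≠ 0) :
    Nat.card {z : ZMod (p^r) // ZMod.castHom (dvd_pow_self p hr) (ZMod p) z = 0} = p^(r-1) := by
  have h2 := card_preimage (ZMod.castHom (dvd_pow_self p hr) (ZMod p)).toAddMonoidHom
    (castHom_surj hp hr) (fun _ => True)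
  rw [Nat.card_congr (Equiv.subtypeUnivEquiv (fun _ => trivial)),
    Nat.card_congr (Equiv.subtypeUnivEquiv (fun _ => trivial))] at h2
  rw [Nat.card_zmod, Nat.card_zmod] at h2
  have h3 : Nat.card {z : ZMod (p^r) //
      (ZMod.castHom (dvd_pow_self p hr) (ZMod p)).toAddMonoidHom z = 0} =
      Nat.card {z : ZMod (p^r) // ZMod.castHom (dvd_pow_self p hr) (ZMod p) z = 0} := rfl
  rw [h3] at h2
  have hpr : p ^ r = p * p ^ (r - 1) := by
    rw [← pow_succ']
    congr 1
    omega
  exact Nat.eq_of_mul_eq_mul_left hp.pos (h2.symm.trans hpr)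

section Global
variable (k : ℕ) (a₁ a₂ b₁ b₂ c : ℤ)

noncomputable def Gcnt (n : ℕ) : ℕ :=
  cntFull k (fun z : ZMod n => IsUnit ((a₁ : ZMod n) * z - (a₂ : ZMod n)) ∧
    IsUnit ((b₁ : ZMod n) * z - (b₂ : ZMod n))) ((c : ZMod n))

lemma Gcnt_one : Gcnt k a₁ a₂ b₁ b₂ c 1 = 1 := by
  rw [Gcnt, cntFull, Nat.card_eq_one_iff_unique]
  refine ⟨inferInstance, ⟨⟨fun _ => 0, fun i => ⟨isUnit_of_subsingleton _,
    isUnit_of_subsingleton _⟩, Subsingleton.elim _ _⟩⟩⟩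

lemma Gcnt_mul {m n : ℕ} (h : Nat.Coprime m n) :
    Gcnt k a₁ a₂ b₁ b₂ c (m * n) = Gcnt k a₁ a₂ b₁ b₂ c m * Gcnt k a₁ a₂ b₁ b₂ c n := by
  classical
  set e := ZMod.chineseRemainder h with he
  have key : ∀ (q q' : ℤ) (z : ZMod (m*n)),
      IsUnit ((q : ZMod (m*n)) * z - (q' : ZMod (m*n))) ↔
        (IsUnit ((q : ZMod m) * (e z).1 - (q' : ZMod m)) ∧
         IsUnit ((q : ZMod n) * (e z).2 - (q' : ZMod n))) := by
    intro q q' z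
    have h1 : IsUnit ((q : ZMod (m*n)) * z - (q' : ZMod (m*n))) ↔
        IsUnit (e ((q : ZMod (m*n)) * z - (q' : ZMod (m*n)))) := by
      constructor
      · intro hu; exact hu.map e
      · intro hu
        have h2 := hu.map e.symm
        simpa using h2
    rw [h1, map_sub, map_mul, map_intCast, map_intCast, prodIsUnit]
    simp
  have hsum : ∀ x : Fin k → ZMod (m*n),
      (∑ i, x i = (c : ZMod (m*n))) ↔
        ((∑ i, (e (x i)).1 = (c : ZMod m)) ∧ (∑ i, (e (x i)).2 = (c : ZMod n))) := by
    intro x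
    rw [← e.injective.eq_iff, map_sum, map_intCast, Prod.ext_iff]
    simp [Prod.fst_sum, Prod.snd_sum]
  rw [Gcnt, Gcnt, Gcnt, cntFull, cntFull, cntFull, ← Nat.card_prod]
  apply Nat.card_congr
  refine (Equiv.subtypeEquiv (Equiv.piCongrRight fun _ : Fin k => e.toEquiv) ?_).trans
    ((Equiv.subtypeEquiv (Equiv.arrowProdEquivProdArrow (Fin k) (fun _ => ZMod m) (fun _ => ZMod n))
      (fun y => Iff.rfl)).trans (Equiv.subtypeProdEquivProd))
  intro x
  show _ ↔ ((∀ i, _ ∧ _) ∧ _) ∧ ((∀ i, _ ∧ _) ∧ _)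
  constructor
  · rintro ⟨hu, hs⟩
    rw [hsum] at hs
    exact ⟨⟨fun i => ⟨((key a₁ a₂ (x i)).mp (hu i).1).1, ((key b₁ b₂ (x i)).mp (hu i).2).1⟩,
      hs.1⟩, ⟨fun i => ⟨((key a₁ a₂ (x i)).mp (hu i).1).2, ((key b₁ b₂ (x i)).mp (hu i).2).2⟩,
      hs.2⟩⟩
  · rintro ⟨⟨hu1, hs1⟩, ⟨hu2, hs2⟩⟩
    refine ⟨fun i => ⟨(key a₁ a₂ (x i)).mpr ⟨(hu1 i).1, (hu2 i).1⟩,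
      (key b₁ b₂ (x i)).mpr ⟨(hu1 i).2, (hu2 i).2⟩⟩, (hsum x).mpr ⟨hs1, hs2⟩⟩

lemma Gcnt_factor {n : ℕ} (hn : n ≠ 0) :
    Gcnt k a₁ a₂ b₁ b₂ c n =
      ∏ p ∈ n.primeFactors, Gcnt k a₁ a₂ b₁ b₂ c (p ^ n.factorization p) := by
  classical
  let F : ArithmeticFunction ℕ :=
    ⟨fun n => if n = 0 then 0 else Gcnt k a₁ a₂ b₁ b₂ c n, if_pos rfl⟩
  have hFval : ∀ m : ℕ, m ≠ 0 → F m = Gcnt k a₁ a₂ b₁ b₂ c m := fun m hm => if_neg hm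
  have hF : F.IsMultiplicative := by
    constructor
    · rw [hFval 1 one_ne_zero, Gcnt_one]
    · intro m n hmn
      rcases eq_or_ne m 0 with rfl | hm
      · have hn1 : n = 1 := by simpa using hmn
        subst hn1
        show F 0 = F 0 * F 1
        rw [hFval 1 one_ne_zero, Gcnt_one, mul_one]
      rcases eq_or_ne n 0 with rfl | hn0
      · have hm1 : m = 1 := by simpa using hmn
        subst hm1
        show F 0 = F 1 * F 0
        rw [hFval 1 one_ne_zero, Gcnt_one, one_mul]
      rw [hFval _ (mul_ne_zero hm hn0), hFval _ hm, hFval _ hn0]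
      exact Gcnt_mul k a₁ a₂ b₁ b₂ c hmn
  have hfac := hF.multiplicative_factorization F hn
  rw [hFval n hn] at hfac
  rw [hfac, Finsupp.prod, Nat.support_factorization]
  refine Finset.prod_congr rfl fun p hp => ?_
  refine hFval _ (pow_ne_zero _ ?_)
  exact (Nat.prime_of_mem_primeFactors hp).pos.ne'

lemma Gcnt_pow (m : ℕ) {p r : ℕ} (hp : p.Prime) (hr : r ≠ 0) :
    Gcnt (m+1) a₁ a₂ b₁ b₂ c (p^r) =
      Gcnt (m+1) a₁ a₂ b₁ b₂ c p * (p^(r-1))^m := by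
  rw [Gcnt, Gcnt, cntFull_succ, cntFull_succ]
  have hUV : ∀ z : ZMod (p^r),
      (IsUnit ((a₁ : ZMod (p^r)) * z - (a₂ : ZMod (p^r))) ∧
        IsUnit ((b₁ : ZMod (p^r)) * z - (b₂ : ZMod (p^r)))) ↔
      (IsUnit ((a₁ : ZMod p) * (ZMod.castHom (dvd_pow_self p hr) (ZMod p) z) - (a₂ : ZMod p)) ∧
        IsUnit ((b₁ : ZMod p) * (ZMod.castHom (dvd_pow_self p hr) (ZMod p) z) - (b₂ : ZMod p))) := by
    intro z
    have h1 := unit_lift hp hr ((a₁ : ZMod (p^r)) * z - (a₂ : ZMod (p^r)))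
    have h2 := unit_lift hp hr ((b₁ : ZMod (p^r)) * z - (b₂ : ZMod (p^r)))
    rw [map_sub, map_mul, map_intCast, map_intCast] at h1 h2
    exact and_congr h1 h2
  have := cntRed_lift (ZMod.castHom (dvd_pow_self p hr) (ZMod p)) (castHom_surj hp hr) m
    (fun z : ZMod (p^r) => IsUnit ((a₁ : ZMod (p^r)) * z - (a₂ : ZMod (p^r))) ∧
      IsUnit ((b₁ : ZMod (p^r)) * z - (b₂ : ZMod (p^r))))
    (fun w : ZMod p => IsUnit ((a₁ : ZMod p) * w - (a₂ : ZMod p)) ∧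
      IsUnit ((b₁ : ZMod p) * w - (b₂ : ZMod p))) hUV ((c : ZMod (p^r)))
  rw [map_intCast] at this
  rw [this, castHom_ker_card hp hr]

lemma Gcnt_prime {p : ℕ} (hp : p.Prime)
    (hA : IsUnit (a₁ : ZMod p)) (hB : IsUnit (b₁ : ZMod p)) :
    Gcnt k a₁ a₂ b₁ b₂ c p =
      pcnt (p := p) ((a₂ : ZMod p) * (a₁ : ZMod p)⁻¹) ((b₂ : ZMod p) * (b₁ : ZMod p)⁻¹) k
        ((c : ZMod p)) := by
  haveI : Fact p.Prime := ⟨hp⟩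
  haveI : NeZero p := ⟨hp.pos.ne'⟩
  rw [Gcnt, pcnt, cntFull, cntFull]
  apply Nat.card_congr
  apply Equiv.subtypeEquivRight
  intro x
  have key : ∀ (q q' : ℤ), IsUnit (q : ZMod p) → ∀ z : ZMod p,
      (IsUnit ((q : ZMod p) * z - (q' : ZMod p)) ↔ z ≠ (q' : ZMod p) * (q : ZMod p)⁻¹) := by
    intro q q' hq z
    rw [isUnit_iff_ne_zero, Ne, Ne, sub_eq_zero]
    refine not_congr ?_
    rw [mul_comm]
    exact (eq_mul_inv_iff_mul_eq₀ hq.ne_zero).symm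
  exact and_congr (forall_congr' fun i =>
    and_congr (key a₁ a₂ hA (x i)) (key b₁ b₂ hB (x i))) Iff.rfl

end Global

lemma isUnit_cast_iff_s3 {u : ℤ} {n : ℕ} [NeZero n] :
    IsUnit ((u : ZMod n)) ↔ Int.gcd u n = 1 := by
  have h2 : IsUnit ((u : ZMod n)) ↔ IsUnit ((u.natAbs : ZMod n)) := by
    rcases Int.natAbs_eq u with h | h
    · conv_lhs => rw [h]
      rw [Int.cast_natCast]
    · conv_lhs => rw [h]
      rw [Int.cast_neg, Int.cast_natCast, IsUnit.neg_iff]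
  rw [h2, ZMod.isUnit_iff_coprime]
  unfold Nat.Coprime
  rw [Int.gcd]
  simp

lemma isUnit_cast_of_dvd {u : ℤ} {n p : ℕ} [NeZero p] (h : Int.gcd u n = 1) (hpd : p ∣ n) :
    IsUnit (u : ZMod p) := by
  rw [isUnit_cast_iff_s3]
  have h1 : Nat.Coprime u.natAbs n := by
    unfold Nat.Coprime
    rw [Int.gcd] at h
    simpa using h
  have h2 : Nat.Coprime u.natAbs p := Nat.Coprime.coprime_dvd_right hpd h1
  rw [Int.gcd]
  simpa using h2

open Polynomial in
lemma Ncount_helper (k : ℕ) (a₁ a₂ b₁ b₂ c : ℤ) (n : ℕ) (hn : 0 < n) :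
    Nat.card {x : Fin k → ℤ //
      (∀ i, 0 ≤ x i ∧ x i < n) ∧
      (∀ i, Int.gcd (((C a₁ * X - C a₂) * (C b₁ * X - C b₂) : Polynomial ℤ).eval (x i)) n = 1) ∧
      (n : ℤ) ∣ (∑ i, x i) - c} = Gcnt k a₁ a₂ b₁ b₂ c n := by
  haveI : NeZero n := ⟨hn.ne'⟩
  rw [Gcnt, cntFull]
  apply Nat.card_congr
  have heval : ∀ a : ℤ, (((C a₁ * X - C a₂) * (C b₁ * X - C b₂) : Polynomial ℤ).eval a) =
      (a₁ * a - a₂) * (b₁ * a - b₂) := by intro a; simp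
  have hgcd : ∀ a : ℤ,
      Int.gcd (((C a₁ * X - C a₂) * (C b₁ * X - C b₂) : Polynomial ℤ).eval a) n = 1 ↔
      (IsUnit ((a₁ : ZMod n) * (a : ZMod n) - (a₂ : ZMod n)) ∧
       IsUnit ((b₁ : ZMod n) * (a : ZMod n) - (b₂ : ZMod n))) := by
    intro a
    rw [heval, ← isUnit_cast_iff_s3]
    push_cast
    exact IsUnit.mul_iff
  have hcast : ∀ z : ZMod n, (((z.val : ℤ) : ZMod n)) = z := by
    intro z
    rw [Int.cast_natCast]
    exact ZMod.natCast_rightInverse z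
  have hval : ∀ a : ℤ, 0 ≤ a → a < n → (((a : ZMod n)).val : ℤ) = a := by
    intro a h0 h1
    have h2 : a = ((a.toNat : ℕ) : ℤ) := (Int.toNat_of_nonneg h0).symm
    have h3 : a.toNat < n := by omega
    rw [h2]
    push_cast
    rw [ZMod.val_natCast, Nat.mod_eq_of_lt h3]
  have hsum : ∀ x : Fin k → ℤ, ((n : ℤ) ∣ (∑ i, x i) - c) ↔
      (∑ i, ((x i : ZMod n)) = (c : ZMod n)) := by
    intro x
    rw [← ZMod.intCast_zmod_eq_zero_iff_dvd, Int.cast_sub, sub_eq_zero]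
    push_cast
    rfl
  refine ⟨fun x => ⟨fun i => ((x.1 i : ZMod n)), ?_, ?_⟩,
          fun y => ⟨fun i => (((y.1 i).val : ℤ)), ?_, ?_, ?_⟩, ?_, ?_⟩
  · exact fun i => (hgcd (x.1 i)).mp (x.2.2.1 i)
  · exact (hsum x.1).mp x.2.2.2
  · intro i
    constructor
    · show (0:ℤ) ≤ ((y.1 i).val : ℤ)
      positivity
    · show (((y.1 i).val : ℤ)) < (n : ℤ)
      exact_mod_cast ZMod.val_lt (y.1 i)
  · intro i
    rw [hgcd, hcast]
    exact y.2.1 i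
  · rw [hsum]
    simp only [hcast]
    exact y.2.2
  · intro x
    exact Subtype.ext (funext fun i => hval (x.1 i) (x.2.1 i).1 (x.2.1 i).2)
  · intro y
    exact Subtype.ext (funext fun i => hcast (y.1 i))

theorem Ncount_quadratic (k : ℕ) (hk : 2 ≤ k) (c : ℤ) (n : ℕ) (hn : 0 < n)
    (a₁ a₂ b₁ b₂ : ℤ) (ha : Int.gcd a₁ n = 1) (hb : Int.gcd b₁ n = 1)
    (hab : Int.gcd (a₁ * b₂ - a₂ * b₁) n = 1) :
    (Ncount k ((C a₁ * X - C a₂) * (C b₁ * X - C b₂)) c n : ℚ) =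
      (-1 : ℚ) ^ (k * n.primeFactors.card) *
        ∏ p ∈ n.primeFactors,
          (p : ℚ) ^ ((k : ℤ) * (n.factorization p) - (n.factorization p) - k) *
            ((p : ℚ) *
              (∑ j ∈ Finset.range (k + 1),
                if (p : ℤ) ∣ ((a₂ * b₁ - a₁ * b₂) * j - (a₁ * b₁ * c - a₁ * b₂ * k))
                then (k.choose j : ℚ) else 0) +
              (2 - (p : ℚ)) ^ k - 2 ^ k) := by
  classical
  obtain ⟨m, rfl⟩ : ∃ m, k = m + 1 := ⟨k - 1, by omega⟩
  haveI : NeZero n := ⟨hn.ne'⟩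
  rw [Ncount, Ncount_helper (m+1) a₁ a₂ b₁ b₂ c n hn,
    Gcnt_factor (m+1) a₁ a₂ b₁ b₂ c hn.ne']
  rw [Nat.cast_prod]
  rw [show ((-1 : ℚ)) ^ ((m+1) * n.primeFactors.card) =
    ∏ _p ∈ n.primeFactors, (-1:ℚ)^(m+1) by rw [Finset.prod_const, ← pow_mul]]
  rw [← Finset.prod_mul_distrib]
  refine Finset.prod_congr rfl fun p hp => ?_
  have hp' : p.Prime := Nat.prime_of_mem_primeFactors hp
  have hpd : p ∣ n := Nat.dvd_of_mem_primeFactors hp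
  haveI : Fact p.Prime := ⟨hp'⟩
  haveI : NeZero p := ⟨hp'.pos.ne'⟩
  have hp0 : (p:ℚ) ≠ 0 := Nat.cast_ne_zero.mpr hp'.pos.ne'
  set r := n.factorization p with hrdef
  have hr : r ≠ 0 := by
    rw [hrdef]
    rw [← Nat.support_factorization] at hp
    exact Finsupp.mem_support_iff.mp hp
  have hA : IsUnit (a₁ : ZMod p) := isUnit_cast_of_dvd ha hpd
  have hB : IsUnit (b₁ : ZMod p) := isUnit_cast_of_dvd hb hpd
  have hAB : IsUnit ((a₁ * b₂ - a₂ * b₁ : ℤ) : ZMod p) := isUnit_cast_of_dvd hab hpd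
  have hA0 := hA.ne_zero
  have hB0 := hB.ne_zero
  have hAB0 : (a₁ : ZMod p) * (b₂ : ZMod p) - (a₂ : ZMod p) * (b₁ : ZMod p) ≠ 0 := by
    have h5 := hAB.ne_zero
    push_cast at h5
    exact h5
  set r1 : ZMod p := (a₂ : ZMod p) * (a₁ : ZMod p)⁻¹ with hr1
  set r2 : ZMod p := (b₂ : ZMod p) * (b₁ : ZMod p)⁻¹ with hr2
  have e1 : r1 * (a₁ : ZMod p) = (a₂ : ZMod p) := by
    rw [hr1, mul_assoc, inv_mul_cancel₀ hA0, mul_one]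
  have e2 : r2 * (b₁ : ZMod p) = (b₂ : ZMod p) := by
    rw [hr2, mul_assoc, inv_mul_cancel₀ hB0, mul_one]
  have hne : r1 ≠ r2 := by
    intro h
    apply hAB0
    linear_combination (b₁ : ZMod p) * e1 - (a₁ : ZMod p) * e2 -
      ((a₁ : ZMod p) * (b₁ : ZMod p)) * h
  rw [Gcnt_pow a₁ a₂ b₁ b₂ c m hp' hr, Gcnt_prime (m+1) a₁ a₂ b₁ b₂ c hp' hA hB]
  rw [Nat.cast_mul, pcnt_formula r1 r2 hne (m+1) ((c : ZMod p))]
  have hSW : (∑ j ∈ Finset.range (m+1+1),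
      if (p : ℤ) ∣ ((a₂ * b₁ - a₁ * b₂) * (j:ℕ) - (a₁ * b₁ * c - a₁ * b₂ * ((m+1 : ℕ) : ℤ)))
      then (((m+1).choose j : ℕ) : ℚ) else 0) = (Wb r1 r2 (m+1) ((c : ZMod p)) : ℚ) := by
    rw [Wb, Nat.cast_sum]
    refine Finset.sum_congr rfl fun j hj => ?_
    have hj' : j ≤ m + 1 := Nat.lt_succ_iff.mp (Finset.mem_range.mp hj)
    rw [Nat.cast_ite, Nat.cast_zero]
    refine if_congr ?_ rfl rfl
    rw [← ZMod.intCast_zmod_eq_zero_iff_dvd, Nat.cast_sub hj']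
    push_cast
    have hkey : ((j:ZMod p) * r1 + (((m:ZMod p)+1) - (j:ZMod p)) * r2 - (c:ZMod p)) *
        ((a₁:ZMod p) * (b₁:ZMod p)) =
        ((a₂:ZMod p) * (b₁:ZMod p) - (a₁:ZMod p) * (b₂:ZMod p)) * (j:ZMod p) -
          ((a₁:ZMod p) * (b₁:ZMod p) * (c:ZMod p) -
            (a₁:ZMod p) * (b₂:ZMod p) * ((m:ZMod p)+1)) := by
      linear_combination ((j : ZMod p) * (b₁ : ZMod p)) * e1 +
        ((((m:ZMod p)+1) - (j:ZMod p)) * (a₁:ZMod p)) * e2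
    constructor
    · intro h
      have h6 : ((j:ZMod p) * r1 + (((m:ZMod p)+1) - (j:ZMod p)) * r2 - (c:ZMod p)) *
          ((a₁:ZMod p) * (b₁:ZMod p)) = 0 := by rw [hkey, h]
      rcases mul_eq_zero.mp h6 with h7 | h7
      · exact sub_eq_zero.mp h7
      · exact absurd h7 (mul_ne_zero hA0 hB0)
    · intro h
      rw [← hkey, sub_eq_zero_of_eq h, zero_mul]
  rw [hSW]
  have hzp : (p : ℚ) ^ ((((m+1) : ℕ) : ℤ) * ((r:ℕ) : ℤ) - ((r:ℕ):ℤ) - (((m+1) : ℕ):ℤ)) =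
      ((p:ℚ)^((r-1)*m : ℕ)) / (p:ℚ) := by
    have hexp : (((m+1) : ℕ) : ℤ) * ((r:ℕ) : ℤ) - ((r:ℕ):ℤ) - (((m+1) : ℕ):ℤ) =
        (((r-1)*m : ℕ) : ℤ) - 1 := by
      rw [Nat.cast_mul, Nat.cast_sub (by omega : 1 ≤ r)]
      push_cast
      ring
    rw [hexp, zpow_sub₀ hp0, zpow_natCast, zpow_one]
  rw [hzp]
  have hcast1 : ((((p ^ (r - 1)) ^ m : ℕ)) : ℚ) = (p:ℚ) ^ ((r-1)*m : ℕ) := by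
    push_cast
    rw [← pow_mul]
  rw [hcast1]
  have h21 : (-1:ℚ)^(m+1) * (2-(p:ℚ))^(m+1) = ((p:ℚ)-2)^(m+1) := by
    rw [← mul_pow]; ring_nf
  have h22 : (-1:ℚ)^(m+1) * 2^(m+1) = (-2:ℚ)^(m+1) := by
    rw [← mul_pow]; norm_num
  have h21m : (-1:ℚ)^m * (2-(p:ℚ))^m = ((p:ℚ)-2)^m := by
    rw [← mul_pow]; ring_nf
  have h22m : (-1:ℚ)^m * 2^m = (-2:ℚ)^m := by
    rw [← mul_pow]; norm_num
  set S := (p:ℚ) ^ ((r-1)*m : ℕ) with hS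
  field_simp
  linear_combination S * h21 - S * h22 + (4*S - 2*(p:ℚ)*S) * h21m - 4*S*h22m
end

section
/- Let p be a prime, let k ≥ 2 and c be integers, let a, b ∈ ℤ_p with a ≠ b, and let f(x) = (x − a)(x − b). Then 𝓜_{k,f,c}(p) = p^{k-1} − ((−1)^k / p) · ( p · Σ_{0 ≤ j ≤ k, (a−b) j ≡ c − bk (mod p)} C(k, j) + (2 − p)^k − 2^k ). -/
open Polynomial

open Finset

def Ncard (p : ℕ) [NeZero p] (a b : ZMod p) (k : ℕ) (c : ZMod p) : ℕ :=
  #((Finset.univ : Finset (Fin k → ZMod p)).filter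
      fun y => (∀ i, y i ≠ a ∧ y i ≠ b) ∧ ∑ i, y i = c)

lemma card_avoid (p : ℕ) [NeZero p] (a b : ZMod p) (hab : a ≠ b) :
    #((Finset.univ : Finset (ZMod p)).filter fun z => z ≠ a ∧ z ≠ b) = p - 2 := by
  have h1 : (Finset.univ : Finset (ZMod p)).filter (fun z => z ≠ a ∧ z ≠ b)
      = Finset.univ \ {a, b} := by
    ext z; simp [and_comm]
  rw [h1, Finset.card_sdiff_of_subset (by simp)]
  simp [Finset.card_pair hab, ZMod.card]

lemma card_avoid_pi (p : ℕ) [NeZero p] (a b : ZMod p) (hab : a ≠ b) (k : ℕ) :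
    #((Finset.univ : Finset (Fin k → ZMod p)).filter fun y => ∀ i, y i ≠ a ∧ y i ≠ b)
      = (p - 2) ^ k := by
  have h1 : (Finset.univ : Finset (Fin k → ZMod p)).filter (fun y => ∀ i, y i ≠ a ∧ y i ≠ b)
      = Fintype.piFinset (fun _ : Fin k =>
          (Finset.univ : Finset (ZMod p)).filter fun z => z ≠ a ∧ z ≠ b) := by
    ext y; simp [Fintype.mem_piFinset]
  rw [h1, Fintype.card_piFinset]
  simp [card_avoid p a b hab]

lemma sum_Ncard (p : ℕ) [NeZero p] (a b : ZMod p) (hab : a ≠ b) (k : ℕ) :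
    ∑ c : ZMod p, Ncard p a b k c = (p - 2) ^ k := by
  rw [← card_avoid_pi p a b hab k]
  rw [Finset.card_eq_sum_card_fiberwise (f := fun y : Fin k → ZMod p => ∑ i, y i)
    (t := Finset.univ) (fun x _ => Finset.mem_univ _)]
  apply Finset.sum_congr rfl
  intro c _
  rw [Ncard, Finset.filter_filter]

lemma Ncard_succ (p : ℕ) [NeZero p] (a b : ZMod p) (k : ℕ) (c : ZMod p) :
    Ncard p a b (k + 1) c
      = ∑ z : ZMod p, if z ≠ a ∧ z ≠ b then Ncard p a b k (c - z) else 0 := by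
  rw [Ncard, Finset.card_eq_sum_card_fiberwise (f := fun y : Fin (k+1) → ZMod p => y 0)
    (t := Finset.univ) (fun x _ => Finset.mem_univ _)]
  apply Finset.sum_congr rfl
  intro z _
  by_cases hz : z ≠ a ∧ z ≠ b
  · rw [if_pos hz, Ncard]
    refine Finset.card_bij' (fun y _ => Fin.tail y) (fun y _ => Fin.cons z y) ?hi ?hj ?li ?ri
    case hi =>
      intro y hy
      simp only [Finset.mem_filter, Finset.mem_univ, true_and] at hy ⊢
      obtain ⟨⟨h1, h3⟩, h0⟩ := hy
      refine ⟨fun i => h1 i.succ, ?_⟩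
      have hs := Fin.sum_univ_succ y
      rw [h3, h0] at hs
      have h5 : ∑ i : Fin k, Fin.tail y i = ∑ i : Fin k, y i.succ := rfl
      rw [h5]
      linear_combination hs.symm
    case hj =>
      intro y hy
      simp only [Finset.mem_filter, Finset.mem_univ, true_and] at hy ⊢
      obtain ⟨h1, h3⟩ := hy
      refine ⟨⟨?_, ?_⟩, ?_⟩
      · intro i
        refine Fin.cases ?_ ?_ i
        · simpa using hz
        · intro j; simpa using h1 j
      · rw [Fin.sum_univ_succ]
        simp only [Fin.cons_zero, Fin.cons_succ]
        rw [h3]; ring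
      · simp
    case li =>
      intro y hy
      simp only [Finset.mem_filter] at hy
      have h0 := hy.2
      show Fin.cons z (Fin.tail y) = y
      rw [← h0]
      exact Fin.cons_self_tail y
    case ri =>
      intro y _
      funext i
      simp [Fin.tail]
  · rw [if_neg hz]
    push_neg at hz
    rw [Finset.card_eq_zero]
    ext y
    simp only [Finset.mem_filter, Finset.mem_univ, true_and, Finset.notMem_empty, iff_false]
    rintro ⟨⟨h1, _⟩, h0⟩
    rcases (h1 0) with ⟨hya, hyb⟩
    by_cases hza : z = a
    · exact hya (h0 ▸ hza ▸ rfl)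
    · exact hyb (h0 ▸ (hz hza) ▸ rfl)

section
variable (p : ℕ) [NeZero p] (a b : ZMod p)

noncomputable def Tsum (k : ℕ) (c : ZMod p) : ℚ :=
  ∑ j ∈ Finset.range (k + 1),
    if (a - b) * (j : ZMod p) = c - b * (k : ZMod p) then (k.choose j : ℚ) else 0

lemma Tsum_succ (k : ℕ) (c : ZMod p) :
    Tsum p a b (k + 1) c = Tsum p a b k (c - a) + Tsum p a b k (c - b) := by
  set d : ZMod p := c - b * ((k + 1 : ℕ) : ZMod p) with hd
  have hca : ∀ j : ℕ, ((a - b) * (j : ZMod p) = (c - a) - b * (k : ZMod p))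
      ↔ ((a - b) * ((j + 1 : ℕ) : ZMod p) = d) := by
    intro j
    push_cast [hd]
    constructor <;> intro h <;> linear_combination h
  have hcb : ∀ j : ℕ, ((a - b) * (j : ZMod p) = (c - b) - b * (k : ZMod p))
      ↔ ((a - b) * ((j : ℕ) : ZMod p) = d) := by
    intro j
    push_cast [hd]
    constructor <;> intro h <;> linear_combination h
  have ha' : Tsum p a b k (c - a)
      = ∑ j ∈ Finset.range (k + 1),
          (if (a - b) * ((j + 1 : ℕ) : ZMod p) = d then (k.choose j : ℚ) else 0) := by
    rw [Tsum]
    exact Finset.sum_congr rfl fun j _ => by rw [if_congr (hca j) rfl rfl]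
  have hb' : Tsum p a b k (c - b)
      = ∑ j ∈ Finset.range (k + 1),
          (if (a - b) * ((j : ℕ) : ZMod p) = d then (k.choose j : ℚ) else 0) := by
    rw [Tsum]
    exact Finset.sum_congr rfl fun j _ => by rw [if_congr (hcb j) rfl rfl]
  set I : ℕ → ℚ := fun j => if (a - b) * ((j : ℕ) : ZMod p) = d then 1 else 0 with hI
  have hite : ∀ (j m : ℕ), (if (a - b) * ((j : ℕ) : ZMod p) = d then (m : ℚ) else 0)
      = I j * m := by
    intro j m
    by_cases h : (a - b) * ((j : ℕ) : ZMod p) = d <;> simp [hI, h]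
  have hT1 : Tsum p a b (k + 1) c = ∑ j ∈ Finset.range (k + 2), I j * ((k+1).choose j : ℚ) := by
    rw [Tsum]
    refine Finset.sum_congr rfl fun j _ => ?_
    rw [← hite]
  rw [hT1, Finset.sum_range_succ' (fun j => I j * ((k+1).choose j : ℚ)) (k+1)]
  have hpas : ∀ j, ((k+1).choose (j+1) : ℚ) = (k.choose j : ℚ) + (k.choose (j+1) : ℚ) := by
    intro j; rw [← Nat.cast_add, ← Nat.choose_succ_succ]
  have : ∑ j ∈ Finset.range (k + 1), I (j+1) * ((k+1).choose (j+1) : ℚ)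
      = (∑ j ∈ Finset.range (k + 1), I (j+1) * (k.choose j : ℚ))
        + ∑ j ∈ Finset.range (k + 1), I (j+1) * (k.choose (j+1) : ℚ) := by
    rw [← Finset.sum_add_distrib]
    exact Finset.sum_congr rfl fun j _ => by rw [hpas]; ring
  rw [this]
  have h2 : ∑ j ∈ Finset.range (k + 1), I (j+1) * (k.choose (j+1) : ℚ)
      = (∑ j ∈ Finset.range (k + 1), I j * (k.choose j : ℚ)) - I 0 * (k.choose 0 : ℚ) := by
    rw [Finset.sum_range_succ' (fun j => I j * (k.choose j : ℚ)) k]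
    rw [Finset.sum_range_succ (fun j => I (j+1) * (k.choose (j+1) : ℚ)) k]
    simp [Nat.choose_succ_self]
  rw [h2, ha', hb']
  have e1 : ∑ j ∈ Finset.range (k + 1),
      (if (a - b) * ((j + 1 : ℕ) : ZMod p) = d then (k.choose j : ℚ) else 0)
      = ∑ j ∈ Finset.range (k + 1), I (j+1) * (k.choose j : ℚ) :=
    Finset.sum_congr rfl fun j _ => by rw [hite]
  have e2 : ∑ j ∈ Finset.range (k + 1),
      (if (a - b) * ((j : ℕ) : ZMod p) = d then (k.choose j : ℚ) else 0)
      = ∑ j ∈ Finset.range (k + 1), I j * (k.choose j : ℚ) :=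
    Finset.sum_congr rfl fun j _ => by rw [hite]
  rw [e1, e2]
  simp
  ring
end

lemma Ncard_closed (p : ℕ) [NeZero p] (hp : p.Prime) (a b : ZMod p) (hab : a ≠ b) :
    ∀ (k : ℕ) (c : ZMod p),
      (Ncard p a b k c : ℚ)
        = (((p : ℚ) - 2) ^ k - (-2) ^ k) / p + (-1) ^ k * Tsum p a b k c := by
  haveI : Fact p.Prime := ⟨hp⟩
  have hp0 : (p : ℚ) ≠ 0 := Nat.cast_ne_zero.mpr hp.ne_zero
  have hp2 : ((p - 2 : ℕ) : ℚ) = (p : ℚ) - 2 := by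
    have := hp.two_le
    push_cast [Nat.cast_sub this]
    ring
  intro k
  induction k with
  | zero =>
    intro c
    have h1 : Ncard p a b 0 c = if (0 : ZMod p) = c then 1 else 0 := by
      rw [Ncard]
      by_cases h : (0 : ZMod p) = c
      · rw [if_pos h, Finset.filter_true_of_mem, Finset.card_univ]
        · simp
        · intro y _
          refine ⟨fun i => i.elim0, ?_⟩
          rw [Fin.sum_univ_zero]; exact h
      · rw [if_neg h, Finset.card_eq_zero]
        ext y
        simp only [Finset.mem_filter, Finset.mem_univ, true_and, Finset.notMem_empty,
          iff_false]
        rintro ⟨-, h2⟩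
        exact h (by rw [← h2, Fin.sum_univ_zero])
    rw [h1, Tsum]
    rw [show (0:ℕ)+1 = 1 from rfl, Finset.sum_range_one]
    simp only [Nat.cast_zero, mul_zero, sub_zero, Nat.choose_self, pow_zero, Nat.cast_one]
    by_cases h : (0 : ZMod p) = c
    · rw [if_pos h, if_pos h]
      norm_num
    · rw [if_neg h, if_neg h]
      norm_num
  | succ k ih =>
    intro c
    have hrec := Ncard_succ p a b k c
    have hcast : (Ncard p a b (k+1) c : ℚ)
        = ∑ z : ZMod p, (if z ≠ a ∧ z ≠ b then (Ncard p a b k (c - z) : ℚ) else 0) := by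
      rw [hrec]
      push_cast
      exact Finset.sum_congr rfl fun z _ => by split <;> simp
    have hsplit : ∑ z : ZMod p, (if z ≠ a ∧ z ≠ b then (Ncard p a b k (c - z) : ℚ) else 0)
        = (∑ z : ZMod p, (Ncard p a b k (c - z) : ℚ))
          - (Ncard p a b k (c - a) : ℚ) - (Ncard p a b k (c - b) : ℚ) := by
      rw [← Finset.sum_filter]
      have hfe : (Finset.univ : Finset (ZMod p)).filter (fun z => z ≠ a ∧ z ≠ b)
          = Finset.univ \ {a, b} := by ext z; simp [and_comm]
      rw [hfe]
      have hsub : ({a, b} : Finset (ZMod p)) ⊆ Finset.univ := by simp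
      have := Finset.sum_sdiff (f := fun z => (Ncard p a b k (c - z) : ℚ)) hsub
      have hpair : ∑ z ∈ ({a, b} : Finset (ZMod p)), (Ncard p a b k (c - z) : ℚ)
          = (Ncard p a b k (c - a) : ℚ) + (Ncard p a b k (c - b) : ℚ) :=
        Finset.sum_pair hab
      linarith [this, hpair]
    have htot : (∑ z : ZMod p, (Ncard p a b k (c - z) : ℚ)) = ((p : ℚ) - 2) ^ k := by
      have hre : (∑ z : ZMod p, (Ncard p a b k (c - z) : ℚ))
          = ∑ w : ZMod p, (Ncard p a b k w : ℚ) :=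
        Fintype.sum_equiv (Equiv.subLeft c) _ _ (fun z => rfl)
      rw [hre, ← Nat.cast_sum, sum_Ncard p a b hab k, Nat.cast_pow, hp2]
    rw [hcast, hsplit, htot, ih (c - a), ih (c - b), Tsum_succ p a b k c]
    field_simp
    ring

lemma card_snoc (p : ℕ) [NeZero p] (a b : ZMod p) (k : ℕ) (c : ZMod p) :
    #((Finset.univ : Finset (Fin k → ZMod p)).filter fun x =>
        (∀ i, x i ≠ a ∧ x i ≠ b) ∧ ((c - ∑ i, x i) ≠ a ∧ (c - ∑ i, x i) ≠ b))
      = Ncard p a b (k + 1) c := by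
  rw [Ncard]
  refine Finset.card_bij' (fun x _ => Fin.snoc x (c - ∑ i, x i)) (fun y _ => Fin.init y)
    ?hi ?hj ?li ?ri
  case hi =>
    intro x hx
    simp only [Finset.mem_filter, Finset.mem_univ, true_and] at hx ⊢
    obtain ⟨h1, h2⟩ := hx
    constructor
    · intro i
      refine Fin.lastCases ?_ ?_ i
      · simpa using h2
      · intro j; simpa using h1 j
    · rw [Fin.sum_univ_castSucc]
      simp only [Fin.snoc_castSucc, Fin.snoc_last]
      ring
  case hj =>
    intro y hy
    simp only [Finset.mem_filter, Finset.mem_univ, true_and] at hy ⊢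
    obtain ⟨h1, h2⟩ := hy
    have hsum : ∑ i : Fin k, Fin.init y i = ∑ i : Fin k, y i.castSucc := rfl
    have hlast : c - ∑ i : Fin k, Fin.init y i = y (Fin.last k) := by
      rw [hsum]
      have := Fin.sum_univ_castSucc y
      rw [h2] at this
      linear_combination this
    refine ⟨fun i => h1 i.castSucc, ?_⟩
    rw [hlast]
    exact h1 (Fin.last k)
  case li =>
    intro x _
    exact Fin.init_snoc _ _
  case ri =>
    intro y hy
    simp only [Finset.mem_filter, Finset.mem_univ, true_and] at hy
    have hlast : c - ∑ i : Fin k, Fin.init y i = y (Fin.last k) := by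
      have := Fin.sum_univ_castSucc y
      rw [hy.2] at this
      have hsum : ∑ i : Fin k, Fin.init y i = ∑ i : Fin k, y i.castSucc := rfl
      rw [hsum]
      linear_combination this
    show Fin.snoc (Fin.init y) (c - ∑ i : Fin k, Fin.init y i) = y
    rw [hlast]
    exact Fin.snoc_init_self y

open Polynomial in
lemma Mcount_eq_s5 (p : ℕ) [NeZero p] (k : ℕ) (c a b : ℤ) :
    Mcount k ((X - C a) * (X - C b)) c p
      = #((Finset.univ : Finset (Fin (k - 1) → ZMod p)).filter fun y =>
          (∏ i, (y i - (a : ZMod p)) * (y i - (b : ZMod p))) *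
            ((((c : ZMod p) - ∑ i, y i) - (a : ZMod p)) *
              (((c : ZMod p) - ∑ i, y i) - (b : ZMod p))) = 0) := by
  have heval : ∀ t : ℤ, ((X - C a) * (X - C b)).eval t = (t - a) * (t - b) := by
    intro t; simp
  have key : ∀ x : Fin (k - 1) → ℤ,
      ((p : ℤ) ∣ (∏ i, ((X - C a) * (X - C b)).eval (x i)) *
          ((X - C a) * (X - C b)).eval (c - ∑ i, x i))
        ↔ ((∏ i, ((x i : ZMod p) - (a : ZMod p)) * ((x i : ZMod p) - (b : ZMod p))) *
            ((((c : ZMod p) - ∑ i, (x i : ZMod p)) - (a : ZMod p)) *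
              (((c : ZMod p) - ∑ i, (x i : ZMod p)) - (b : ZMod p))) = 0) := by
    intro x
    rw [← ZMod.intCast_zmod_eq_zero_iff_dvd]
    simp only [heval]
    have hc : (((∏ i, (x i - a) * (x i - b)) * ((c - ∑ i, x i - a) * (c - ∑ i, x i - b)) : ℤ)
        : ZMod p)
        = (∏ i, ((x i : ZMod p) - (a : ZMod p)) * ((x i : ZMod p) - (b : ZMod p))) *
            ((((c : ZMod p) - ∑ i, (x i : ZMod p)) - (a : ZMod p)) *
              (((c : ZMod p) - ∑ i, (x i : ZMod p)) - (b : ZMod p))) := by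
      push_cast
      ring
    rw [hc]
  have hyy : ∀ z : ZMod p, (((z.val : ℤ) : ZMod p)) = z := by
    intro z
    have : (((z.val : ℤ) : ZMod p)) = ((z.val : ℕ) : ZMod p) := by push_cast; ring
    rw [this]
    exact ZMod.natCast_rightInverse z
  rw [Mcount]
  have e : {x : Fin (k - 1) → ℤ //
      (∀ i, 0 ≤ x i ∧ x i < p) ∧
      (p : ℤ) ∣ (∏ i, ((X - C a) * (X - C b)).eval (x i)) *
        ((X - C a) * (X - C b)).eval (c - ∑ i, x i)}
      ≃ {y : Fin (k - 1) → ZMod p //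
          (∏ i, (y i - (a : ZMod p)) * (y i - (b : ZMod p))) *
            ((((c : ZMod p) - ∑ i, y i) - (a : ZMod p)) *
              (((c : ZMod p) - ∑ i, y i) - (b : ZMod p))) = 0} := by
    refine
      { toFun := fun x => ⟨fun i => ((x.1 i : ZMod p)), (key x.1).mp x.2.2⟩
        invFun := fun y => ⟨fun i => (((y.1 i).val : ℤ)), ?_, ?_⟩
        left_inv := ?_
        right_inv := ?_ }
    · intro i
      constructor
      · exact Int.natCast_nonneg _
      · show (((y.1 i).val : ℤ)) < (p : ℤ)
        exact_mod_cast ZMod.val_lt (y.1 i)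
    · rw [key]
      simpa only [hyy] using y.2
    · rintro ⟨x, hx, hd⟩
      ext i
      show ((((x i : ZMod p)).val : ℤ)) = x i
      rw [ZMod.val_intCast]
      exact Int.emod_eq_of_lt (hx i).1 (hx i).2
    · rintro ⟨y, hy⟩
      ext i
      exact hyy (y i)
  rw [Nat.card_congr e, Nat.card_eq_fintype_card, Fintype.card_subtype]

open Polynomial in
lemma Mcount_add_Ncard (p : ℕ) [NeZero p] (hp : p.Prime) (k : ℕ) (hk : 2 ≤ k) (c a b : ℤ) :
    Mcount k ((X - C a) * (X - C b)) c p
        + Ncard p (a : ZMod p) (b : ZMod p) k (c : ZMod p) = p ^ (k - 1) := by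
  haveI : Fact p.Prime := ⟨hp⟩
  have hk1 : k - 1 + 1 = k := by omega
  rw [Mcount_eq_s5 p k c a b]
  have hnot : (Finset.univ : Finset (Fin (k - 1) → ZMod p)).filter (fun y => ¬
        ((∏ i, (y i - (a : ZMod p)) * (y i - (b : ZMod p))) *
          ((((c : ZMod p) - ∑ i, y i) - (a : ZMod p)) *
            (((c : ZMod p) - ∑ i, y i) - (b : ZMod p))) = 0))
      = (Finset.univ : Finset (Fin (k - 1) → ZMod p)).filter (fun y =>
          (∀ i, y i ≠ (a : ZMod p) ∧ y i ≠ (b : ZMod p)) ∧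
            (((c : ZMod p) - ∑ i, y i) ≠ (a : ZMod p) ∧
              ((c : ZMod p) - ∑ i, y i) ≠ (b : ZMod p))) := by
    apply Finset.filter_congr
    intro y _
    simp only [mul_ne_zero_iff, Finset.prod_ne_zero_iff, Finset.mem_univ, ne_eq,
      sub_eq_zero, mul_eq_zero, not_or]
    constructor
    · rintro h
      exact ⟨fun i => ⟨(h.1 i trivial).1, (h.1 i trivial).2⟩, h.2.1, h.2.2⟩
    · rintro ⟨h1, h2, h3⟩
      exact ⟨fun i _ => h1 i, h2, h3⟩
  have hcnt : #((Finset.univ : Finset (Fin (k - 1) → ZMod p)).filter (fun y =>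
        (∏ i, (y i - (a : ZMod p)) * (y i - (b : ZMod p))) *
          ((((c : ZMod p) - ∑ i, y i) - (a : ZMod p)) *
            (((c : ZMod p) - ∑ i, y i) - (b : ZMod p))) = 0))
      + #((Finset.univ : Finset (Fin (k - 1) → ZMod p)).filter (fun y => ¬
        ((∏ i, (y i - (a : ZMod p)) * (y i - (b : ZMod p))) *
          ((((c : ZMod p) - ∑ i, y i) - (a : ZMod p)) *
            (((c : ZMod p) - ∑ i, y i) - (b : ZMod p))) = 0)))
      = #(Finset.univ : Finset (Fin (k - 1) → ZMod p)) :=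
    Finset.card_filter_add_card_filter_not _
  have hsn := card_snoc p (a : ZMod p) (b : ZMod p) (k - 1) (c : ZMod p)
  rw [hk1] at hsn
  rw [← hsn, ← hnot, hcnt, Finset.card_univ, Fintype.card_pi]
  simp [ZMod.card]

theorem Mcount_quadratic (p : ℕ) (hp : p.Prime) (k : ℕ) (hk : 2 ≤ k) (c : ℤ)
    (a b : ℤ) (ha : 0 ≤ a) (ha' : a < p) (hb : 0 ≤ b) (hb' : b < p) (hab : a ≠ b) :
    (Mcount k ((X - C a) * (X - C b)) c p : ℚ) =
      (p : ℚ) ^ (k - 1) -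
        ((-1 : ℚ) ^ k / p) *
          ((p : ℚ) *
            (∑ j ∈ Finset.range (k + 1),
              if (p : ℤ) ∣ ((a - b) * j - (c - b * k)) then (k.choose j : ℚ) else 0) +
            (2 - (p : ℚ)) ^ k - 2 ^ k) := by
  haveI : Fact p.Prime := ⟨hp⟩
  have hp0 : (p : ℚ) ≠ 0 := Nat.cast_ne_zero.mpr hp.ne_zero
  have hab' : (a : ZMod p) ≠ (b : ZMod p) := by
    intro h
    apply hab
    have h2 : (((a : ZMod p)).val : ℤ) = (((b : ZMod p)).val : ℤ) := by rw [h]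
    rwa [ZMod.val_intCast, ZMod.val_intCast, Int.emod_eq_of_lt ha ha',
      Int.emod_eq_of_lt hb hb'] at h2
  have hadd := Mcount_add_Ncard p hp k hk c a b
  have hQ : (Mcount k ((X - C a) * (X - C b)) c p : ℚ)
      = (p : ℚ) ^ (k - 1) - (Ncard p (a : ZMod p) (b : ZMod p) k (c : ZMod p) : ℚ) := by
    have h3 := congrArg (Nat.cast : ℕ → ℚ) hadd
    push_cast at h3
    linarith
  rw [hQ, Ncard_closed p hp (a : ZMod p) (b : ZMod p) hab' k (c : ZMod p)]
  have hT : Tsum p (a : ZMod p) (b : ZMod p) k (c : ZMod p)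
      = ∑ j ∈ Finset.range (k + 1),
          if (p : ℤ) ∣ ((a - b) * j - (c - b * k)) then (k.choose j : ℚ) else 0 := by
    rw [Tsum]
    refine Finset.sum_congr rfl fun j _ => ?_
    refine if_congr ?_ rfl rfl
    have hc : ((((a - b) * j - (c - b * k)) : ℤ) : ZMod p)
        = ((a : ZMod p) - (b : ZMod p)) * (j : ZMod p)
          - ((c : ZMod p) - (b : ZMod p) * (k : ZMod p)) := by
      push_cast
      ring
    rw [← ZMod.intCast_zmod_eq_zero_iff_dvd, hc, sub_eq_zero]
  rw [hT]
  have h1 : ((p : ℚ) - 2) ^ k = (-1 : ℚ) ^ k * (2 - (p : ℚ)) ^ k := by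
    rw [show ((p : ℚ) - 2) = (-1) * (2 - (p : ℚ)) by ring, mul_pow]
  have h2 : ((-2 : ℚ)) ^ k = (-1 : ℚ) ^ k * 2 ^ k := by
    rw [show ((-2 : ℚ)) = (-1) * 2 by ring, mul_pow]
  rw [h1, h2]
  field_simp
  ring
end

section
/- Let p be a prime, let k ≥ 2 and c be integers, and let f(x) = ax + b ∈ ℤ[x] with gcd(a, p) = 1. Then 𝓜_{k,f,c}(p) = p^{k-1} − ((p−1)^k + (−1)^k δ_p)/p, where δ_p = p − 1 if p divides ac + kb, and δ_p = −1 otherwise. -/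
open Polynomial

private def MstepEquiv (F : Type*) [CommRing F] (m : ℕ) (t : F) :
    {z : Fin (m+1) → F // (∀ i, z i ≠ 0) ∧ ∑ i, z i = t} ≃
      Σ u : {u : F // u ≠ 0}, {z : Fin m → F // (∀ i, z i ≠ 0) ∧ ∑ i, z i = t - u.1} where
  toFun z := ⟨⟨z.1 0, z.2.1 0⟩, ⟨Fin.tail z.1, ⟨fun i => z.2.1 i.succ, by
    have := z.2.2
    rw [Fin.sum_univ_succ] at this
    simp [Fin.tail]
    linear_combination this⟩⟩⟩
  invFun x := ⟨Fin.cons x.1.1 x.2.1, ⟨by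
    intro i
    refine Fin.cases ?_ ?_ i
    · simpa using x.1.2
    · intro j; simpa using x.2.2.1 j, by
    rw [Fin.sum_univ_succ]
    simp [x.2.2.2]⟩⟩
  left_inv z := by
    ext i
    simp [Fin.cons_self_tail]
  right_inv x := by
    ext i <;> simp [Fin.tail]

private lemma Mkey (p : ℕ) [Fact p.Prime] : ∀ (m : ℕ) (t : ZMod p),
    (p : ℤ) * (Fintype.card {z : Fin m → ZMod p // (∀ i, z i ≠ 0) ∧ ∑ i, z i = t}) =
      ((p : ℤ) - 1)^m + (-1)^m * (if t = 0 then (p:ℤ) - 1 else -1) := by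
  intro m
  induction m with
  | zero =>
    intro t
    rcases eq_or_ne t 0 with h | h
    · subst h
      simp
    · rw [if_neg h]
      have : Fintype.card {z : Fin 0 → ZMod p // (∀ i, z i ≠ 0) ∧ ∑ i, z i = t} = 0 := by
        rw [Fintype.card_eq_zero_iff]
        refine ⟨fun z => ?_⟩
        have := z.2.2
        simp at this
        exact h this.symm
      rw [this]
      simp
  | succ m ih =>
    intro t
    rw [Fintype.card_congr (MstepEquiv (ZMod p) m t), Fintype.card_sigma]
    have hp2 : 2 ≤ p := (Fact.out : p.Prime).two_le
    have hcast : ((∑ u : {u : ZMod p // u ≠ 0},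
        Fintype.card {z : Fin m → ZMod p // (∀ i, z i ≠ 0) ∧ ∑ i, z i = t - u.1} : ℕ) : ℤ)
        = ∑ u : {u : ZMod p // u ≠ 0},
        ((Fintype.card {z : Fin m → ZMod p // (∀ i, z i ≠ 0) ∧ ∑ i, z i = t - u.1} : ℤ)) := by
      push_cast; rfl
    rw [hcast, Finset.mul_sum]
    have h2 : ∀ u : {u : ZMod p // u ≠ 0},
        (p:ℤ) * (Fintype.card {z : Fin m → ZMod p // (∀ i, z i ≠ 0) ∧ ∑ i, z i = t - u.1} : ℤ)
        = ((p : ℤ) - 1)^m + (-1)^m * (if u.1 = t then (p:ℤ) - 1 else -1) := by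
      intro u
      rw [ih (t - u.1)]
      congr 2
      simp [sub_eq_zero, eq_comm]
    rw [Finset.sum_congr rfl (fun u _ => h2 u)]
    rw [← Finset.sum_subtype (Finset.univ.erase (0 : ZMod p)) (by simp)
      (fun u => ((p : ℤ) - 1)^m + (-1)^m * (if u = t then (p:ℤ) - 1 else -1))]
    have hcard : (Finset.univ.erase (0 : ZMod p)).card = p - 1 := by
      rw [Finset.card_erase_of_mem (Finset.mem_univ _), Finset.card_univ, ZMod.card]
    rcases eq_or_ne t 0 with h | h
    · subst h
      rw [Finset.sum_congr rfl (fun u hu => by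
        rw [if_neg (by simpa using (Finset.mem_erase.mp hu).1)])]
      rw [Finset.sum_const, hcard, if_pos rfl]
      have : ((p - 1 : ℕ) : ℤ) = (p : ℤ) - 1 := by
        rw [Nat.cast_sub (by linarith : 1 ≤ p)]; push_cast; ring
      rw [nsmul_eq_mul, this]
      ring
    · rw [if_neg h]
      have ht : t ∈ Finset.univ.erase (0 : ZMod p) := by simp [h]
      rw [← Finset.add_sum_erase _ _ ht, if_pos rfl]
      rw [Finset.sum_congr rfl (fun u hu => by
        rw [if_neg (Finset.mem_erase.mp hu).1])]
      rw [Finset.sum_const, Finset.card_erase_of_mem ht, hcard, nsmul_eq_mul]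
      have : ((p - 1 - 1 : ℕ) : ℤ) = (p : ℤ) - 2 := by
        rw [Nat.cast_sub (Nat.le_sub_one_of_lt (by linarith) : 1 ≤ p - 1),
          Nat.cast_sub (by linarith : 1 ≤ p)]; push_cast; ring
      rw [this]
      ring

theorem Mcount_linear (p : ℕ) (hp : p.Prime) (k : ℕ) (hk : 2 ≤ k) (c : ℤ)
    (a b : ℤ) (ha : Int.gcd a p = 1) :
    (Mcount k (C a * X + C b) c p : ℚ) =
      (p : ℚ) ^ (k - 1) -
        (((p : ℚ) - 1) ^ k +
          (-1 : ℚ) ^ k *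
            (if (p : ℤ) ∣ (a * c + k * b) then (p : ℚ) - 1 else -1)) / p := by
  classical
  haveI : Fact p.Prime := ⟨hp⟩
  have hp2 : 2 ≤ p := hp.two_le
  obtain ⟨m, rfl⟩ : ∃ m, k = m + 1 := ⟨k - 1, by omega⟩
  have hp0 : (p : ℚ) ≠ 0 := by positivity
  -- a is invertible mod p
  have ha' : (a : ZMod p) ≠ 0 := by
    intro h
    rw [ZMod.intCast_zmod_eq_zero_iff_dvd] at h
    have hc := Int.isCoprime_iff_gcd_eq_one.mpr ha
    have hu := hc.isUnit_of_dvd' h dvd_rfl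
    rw [Int.isUnit_iff] at hu
    rcases hu with hu | hu <;>
      [skip; skip] <;>
      · have : ((p : ℤ)) = _ := hu
        have h2 : (2 : ℤ) ≤ (p : ℤ) := by exact_mod_cast hp2
        simp [this] at h2 <;> linarith
  set t : ZMod p := ((a * c + ((m + 1 : ℕ) : ℤ) * b : ℤ) : ZMod p) with htdef
  -- Step 1 : Mcount as a count over ZMod p
  have step1 : Mcount (m+1) (C a * X + C b) c p =
      Fintype.card {y : Fin m → ZMod p //
        (∏ i, ((a : ZMod p) * y i + (b : ZMod p))) *
          ((a : ZMod p) * ((c : ZMod p) - ∑ i, y i) + (b : ZMod p)) = 0} := by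
    have hdiv : ∀ x : Fin m → ℤ,
        ((p:ℤ) ∣ (∏ i, (C a * X + C b).eval (x i)) * (C a * X + C b).eval (c - ∑ i, x i)) ↔
        ((∏ i, ((a : ZMod p) * ((x i : ZMod p)) + (b : ZMod p))) *
          ((a : ZMod p) * ((c : ZMod p) - ∑ i, ((x i : ZMod p))) + (b : ZMod p)) = 0) := by
      intro x
      rw [← ZMod.intCast_zmod_eq_zero_iff_dvd]
      push_cast [eval_add, eval_mul, eval_C, eval_X]
      rfl
    have hval : ∀ x : ℤ, 0 ≤ x → x < p → (((x : ZMod p)).val : ℤ) = x := by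
      intro x h0 h1
      rw [ZMod.val_intCast, Int.emod_eq_of_lt h0 h1]
    have hback : ∀ y : ZMod p, ((((y.val : ℤ)) : ZMod p)) = y := by
      intro y
      push_cast
      simp [ZMod.natCast_val, ZMod.cast_id]
    rw [Mcount, ← Nat.card_eq_fintype_card]
    apply Nat.card_congr
    refine ⟨fun x => ⟨fun i => (x.1 i : ZMod p), (hdiv x.1).mp x.2.2⟩,
      fun y => ⟨fun i => ((y.1 i).val : ℤ), ⟨fun i => ⟨Int.natCast_nonneg _, by
        simp only []; exact_mod_cast (y.1 i).val_lt⟩,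
        (hdiv _).mpr (by simpa only [hback] using y.2)⟩⟩,
      fun x => ?_, fun y => ?_⟩
    · ext i
      exact hval _ (x.2.1 i).1 (x.2.1 i).2
    · ext i
      exact hback _
  -- Step 2/3 : complement count
  have step23 : Fintype.card {y : Fin m → ZMod p //
        (∏ i, ((a : ZMod p) * y i + (b : ZMod p))) *
          ((a : ZMod p) * ((c : ZMod p) - ∑ i, y i) + (b : ZMod p)) = 0} +
      Fintype.card {y : Fin m → ZMod p //
        (∀ i, (a : ZMod p) * y i + (b : ZMod p) ≠ 0) ∧
          (a : ZMod p) * ((c : ZMod p) - ∑ i, y i) + (b : ZMod p) ≠ 0} = p ^ m := by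
    have hQ : ∀ y : Fin m → ZMod p,
        ((∀ i, (a : ZMod p) * y i + (b : ZMod p) ≠ 0) ∧
          (a : ZMod p) * ((c : ZMod p) - ∑ i, y i) + (b : ZMod p) ≠ 0) ↔
          ¬ ((∏ i, ((a : ZMod p) * y i + (b : ZMod p))) *
            ((a : ZMod p) * ((c : ZMod p) - ∑ i, y i) + (b : ZMod p)) = 0) := by
      intro y
      simp [mul_eq_zero, Finset.prod_eq_zero_iff, not_or]
    rw [Fintype.card_congr (Equiv.subtypeEquivRight hQ), Fintype.card_subtype_compl,
      Nat.add_sub_cancel' (Fintype.card_subtype_le _)]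
    simp [ZMod.card]
  -- Step 4 : affine change of variables
  have step4 : Fintype.card {y : Fin m → ZMod p //
        (∀ i, (a : ZMod p) * y i + (b : ZMod p) ≠ 0) ∧
          (a : ZMod p) * ((c : ZMod p) - ∑ i, y i) + (b : ZMod p) ≠ 0} =
      Fintype.card {w : Fin m → ZMod p // (∀ i, w i ≠ 0) ∧ ∑ i, w i ≠ t} := by
    apply Fintype.card_congr
    refine Equiv.subtypeEquiv
      (Equiv.piCongrRight fun _ => (Equiv.mulLeft₀ _ ha').trans
        (Equiv.addRight (b : ZMod p))) ?_
    intro y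
    simp only [Equiv.piCongrRight_apply, Pi.map_apply, Equiv.trans_apply,
      Equiv.mulLeft₀_apply, Equiv.coe_addRight]
    refine and_congr Iff.rfl ?_
    have hsum : ∑ i, ((a : ZMod p) * y i + (b : ZMod p)) =
        (a : ZMod p) * (∑ i, y i) + (m : ZMod p) * (b : ZMod p) := by
      rw [Finset.sum_add_distrib, ← Finset.mul_sum, Finset.sum_const, Finset.card_univ,
        Fintype.card_fin, nsmul_eq_mul]
    have hlin : (a : ZMod p) * ((c : ZMod p) - ∑ i, y i) + (b : ZMod p) =
        t - ∑ i, ((a : ZMod p) * y i + (b : ZMod p)) := by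
      rw [hsum, htdef]
      push_cast
      ring
    rw [hlin, sub_ne_zero]
    exact ne_comm
  -- Step 5 : partition of nonzero tuples by their sum
  have step5 : Fintype.card {w : Fin m → ZMod p // (∀ i, w i ≠ 0) ∧ ∑ i, w i = t} +
      Fintype.card {w : Fin m → ZMod p // (∀ i, w i ≠ 0) ∧ ∑ i, w i ≠ t} = (p - 1) ^ m := by
    have hnz : Fintype.card {w : Fin m → ZMod p // ∀ i, w i ≠ 0} = (p - 1) ^ m := by
      rw [Fintype.card_congr (Equiv.subtypePiEquivPi
        (p := fun (_ : Fin m) (x : ZMod p) => x ≠ 0)), Fintype.card_pi]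
      have : Fintype.card {x : ZMod p // x ≠ 0} = p - 1 := by
        rw [Fintype.card_subtype_compl, Fintype.card_subtype_eq, ZMod.card]
      simp [this]
    rw [← hnz]
    rw [Fintype.card_subtype, Fintype.card_subtype, Fintype.card_subtype]
    rw [← Finset.filter_filter, ← Finset.filter_filter,
      Finset.card_filter_add_card_filter_not]
  -- key lemma for t
  have key := Mkey p m t
  have hif : (t = 0) ↔ (p : ℤ) ∣ (a * c + ((m + 1 : ℕ) : ℤ) * b) := by
    rw [htdef, ZMod.intCast_zmod_eq_zero_iff_dvd]
  -- Assemble everything over ℚ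
  set M : ℕ := Mcount (m+1) (C a * X + C b) c p with hM
  set S : ℕ := Fintype.card {w : Fin m → ZMod p // (∀ i, w i ≠ 0) ∧ ∑ i, w i = t} with hS
  set N : ℕ := Fintype.card {w : Fin m → ZMod p // (∀ i, w i ≠ 0) ∧ ∑ i, w i ≠ t} with hN
  have e1 : (M : ℚ) + (N : ℚ) = (p : ℚ) ^ m := by
    rw [← step1, step4] at step23
    exact_mod_cast congrArg (Nat.cast : ℕ → ℚ) step23
  have e3 : (S : ℚ) + (N : ℚ) = ((p : ℚ) - 1) ^ m := by
    have := congrArg (Nat.cast : ℕ → ℚ) step5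
    push_cast [Nat.cast_sub (by linarith : 1 ≤ p)] at this
    exact_mod_cast this
  have e4 : (p : ℚ) * (S : ℚ) = ((p : ℚ) - 1) ^ m +
      (-1 : ℚ) ^ m * (if (p : ℤ) ∣ (a * c + ((m + 1 : ℕ) : ℤ) * b)
        then (p : ℚ) - 1 else -1) := by
    rcases em ((p : ℤ) ∣ (a * c + ((m + 1 : ℕ) : ℤ) * b)) with h | h
    · rw [if_pos h]
      rw [if_pos (hif.mpr h)] at key
      exact_mod_cast congrArg (Int.cast : ℤ → ℚ) key
    · rw [if_neg h]
      rw [if_neg (fun ht0 => h (hif.mp ht0))] at key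
      exact_mod_cast congrArg (Int.cast : ℤ → ℚ) key
  simp only [Nat.add_sub_cancel]
  rcases em ((p : ℤ) ∣ (a * c + ((m + 1 : ℕ) : ℤ) * b)) with h | h
  · rw [if_pos h] at e4 ⊢
    field_simp
    linear_combination (p : ℚ) * e1 - (p : ℚ) * e3 + e4
  · rw [if_neg h] at e4 ⊢
    field_simp
    linear_combination (p : ℚ) * e1 - (p : ℚ) * e3 + e4
end

section
/- Let p be a prime, let k ≥ 2 and c be integers, and let f(x) = ax + b ∈ ℤ[x] with gcd(a, p) = 1. Let a^{-1} be an integer with a·a^{-1} ≡ 1 (mod p). Then 𝓜_{k,f,c}(p) = p^{k-1} − (p−1)^{k-1} + N(k−1, c + k·b·a^{-1}, p), where N(k−1, c', p) denotes the number of tuples (y_1,...,y_{k-1}) with each y_i ∈ ℤ_p coprime to p and y_1 + ... + y_{k-1} ≡ c' (mod p). -/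
open Polynomial

/-- `Nunits r c' p` is the number of tuples `(y_1,...,y_r) ∈ {0,...,p-1}^r` with each `y_i`
coprime to `p` and `y_1 + ... + y_r ≡ c' (mod p)`. -/
noncomputable def Nunits (r : ℕ) (c' : ℤ) (p : ℕ) : ℕ :=
  Nat.card {y : Fin r → ℤ //
    (∀ i, 0 ≤ y i ∧ y i < p ∧ Int.gcd (y i) p = 1) ∧
    (p : ℤ) ∣ (∑ i, y i) - c'}

lemma card_int_box (p : ℕ) (hp : 0 < p) (r : ℕ) (P : (Fin r → ZMod p) → Prop) :
    Nat.card {x : Fin r → ℤ // (∀ i, 0 ≤ x i ∧ x i < p) ∧ P (fun i => (x i : ZMod p))}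
      = Nat.card {z : Fin r → ZMod p // P z} := by
  haveI : NeZero p := ⟨hp.ne'⟩
  refine Nat.card_congr ?_
  have key : ∀ z : ZMod p, (((z.val : ℤ) : ZMod p)) = z := by
    intro z; simp [ZMod.natCast_val, ZMod.cast_id]
  have key2 : ∀ x : ℤ, 0 ≤ x → x < p → (((x : ZMod p).val : ℤ)) = x := by
    intro x h0 h1
    lift x to ℕ using h0
    rw [Int.cast_natCast, ZMod.val_natCast_of_lt (by exact_mod_cast h1)]
  refine ⟨fun x => ⟨fun i => ((x.1 i : ZMod p)), x.2.2⟩,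
    fun z => ⟨fun i => ((z.1 i).val : ℤ),
      ⟨fun i => ⟨Int.natCast_nonneg _, by
        show ((z.1 i).val : ℤ) < p
        exact_mod_cast (z.1 i).val_lt⟩, by
        have : (fun i => (((z.1 i).val : ℤ) : ZMod p)) = z.1 := by
          funext i; exact key _
        rw [this]; exact z.2⟩⟩, ?_, ?_⟩
  · intro x
    ext i
    exact key2 _ (x.2.1 i).1 (x.2.1 i).2
  · intro z
    ext i
    exact key _

lemma card_nonzero_tuples (p : ℕ) (hp : p.Prime) (r : ℕ) :
    Nat.card {z : Fin r → ZMod p // ∀ i, z i ≠ 0} = (p - 1) ^ r := by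
  haveI : Fact p.Prime := ⟨hp⟩
  rw [Nat.card_congr (Equiv.subtypePiEquivPi (p := fun _ u => u ≠ 0))]
  rw [Nat.card_pi]
  have : Nat.card {u : ZMod p // u ≠ 0} = p - 1 := by
    rw [Nat.card_congr (unitsEquivNeZero (G₀ := ZMod p)).symm, Nat.card_units, Nat.card_zmod]
  simp [this]

lemma card_split {α : Type*} [Fintype α] (P Q : α → Prop) :
    Nat.card {x // P x ∧ Q x} + Nat.card {x // P x ∧ ¬ Q x} = Nat.card {x // P x} := by
  classical
  simp only [Nat.card_eq_fintype_card, Fintype.card_subtype]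
  rw [← Finset.filter_filter, ← Finset.filter_filter]
  exact Finset.card_filter_add_card_filter_not _

lemma card_split' {α : Type*} [Fintype α] (Q : α → Prop) :
    Nat.card {x // Q x} + Nat.card {x // ¬ Q x} = Nat.card α := by
  classical
  simp only [Nat.card_eq_fintype_card, Fintype.card_subtype]
  exact Finset.card_filter_add_card_filter_not _

theorem Mcount_linear_via_units (p : ℕ) (hp : p.Prime) (k : ℕ) (hk : 2 ≤ k) (c : ℤ)
    (a b ainv : ℤ) (ha : Int.gcd a p = 1) (hainv : (p : ℤ) ∣ a * ainv - 1) :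
    (Mcount k (C a * X + C b) c p : ℤ) =
      (p : ℤ) ^ (k - 1) - ((p : ℤ) - 1) ^ (k - 1) +
        Nunits (k - 1) (c + k * b * ainv) p := by
  haveI : Fact p.Prime := ⟨hp⟩
  set r := k - 1 with hr
  have hk1 : r + 1 = k := Nat.sub_add_cancel (by omega)
  set aa : ZMod p := (a : ZMod p) with haadef
  set bb : ZMod p := (b : ZMod p) with hbbdef
  set av : ZMod p := (ainv : ZMod p) with havdef
  set cc' : ZMod p := ((c + k * b * ainv : ℤ) : ZMod p) with hcc'
  have hav : aa * av = 1 := by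
    have h0 : ((a * ainv - 1 : ℤ) : ZMod p) = 0 := (ZMod.intCast_zmod_eq_zero_iff_dvd _ p).2 hainv
    push_cast at h0
    linear_combination h0
  have haa : aa ≠ 0 := by
    intro h
    rw [h, zero_mul] at hav
    exact zero_ne_one hav
  have hcc2 : cc' = (c : ZMod p) + ((r : ZMod p) + 1) * bb * av := by
    rw [hcc', ← hk1]
    push_cast
    ring
  -- the master algebraic identity
  have master : ∀ w : Fin r → ZMod p,
      (∏ i, (aa * ((w i : ZMod p)) + bb)) * (aa * ((c : ZMod p) - ∑ i, w i) + bb)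
        = aa ^ r * ((∏ i, (w i + av * bb)) * (aa * (cc' - ∑ i, (w i + av * bb)))) := by
    intro w
    have h2 : ∑ i, (w i + av * bb) = (∑ i, w i) + (r : ZMod p) * (av * bb) := by
      rw [Finset.sum_add_distrib, Finset.sum_const, Finset.card_univ, Fintype.card_fin,
        nsmul_eq_mul]
    have h3 : (∏ i, (aa * w i + bb)) = aa ^ r * ∏ i, (w i + av * bb) := by
      have factor : ∀ t : ZMod p, aa * t + bb = aa * (t + av * bb) := by
        intro t
        rw [mul_add, ← mul_assoc, hav, one_mul]
      simp only [factor]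
      rw [Finset.prod_mul_distrib, Finset.prod_const, Finset.card_univ, Fintype.card_fin]
    rw [h3, h2, hcc2]
    linear_combination (-(aa ^ r * (∏ i, (w i + av * bb)) * bb)) * hav
  -- Step 1 : Mcount in terms of ZMod counting
  have hM : Mcount k (C a * X + C b) c p
      = Nat.card {z : Fin r → ZMod p // (∏ i, z i) * (cc' - ∑ i, z i) = 0} := by
    rw [Mcount]
    have step1 : Nat.card {x : Fin r → ℤ //
        (∀ i, 0 ≤ x i ∧ x i < p) ∧
        (p : ℤ) ∣ (∏ i, (C a * X + C b).eval (x i)) * (C a * X + C b).eval (c - ∑ i, x i)}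
        = Nat.card {x : Fin r → ℤ //
        (∀ i, 0 ≤ x i ∧ x i < p) ∧
        (fun w : Fin r → ZMod p =>
          (∏ i, (aa * w i + bb)) * (aa * ((c : ZMod p) - ∑ i, w i) + bb) = 0)
          (fun i => ((x i : ZMod p)))} := by
      refine Nat.card_congr (Equiv.subtypeEquivRight fun x => ?_)
      have hiff : ((p : ℤ) ∣ (∏ i, (C a * X + C b).eval (x i)) *
          (C a * X + C b).eval (c - ∑ i, x i))
          ↔ ((∏ i, (aa * ((x i : ZMod p)) + bb)) *
              (aa * ((c : ZMod p) - ∑ i, ((x i : ZMod p))) + bb) = 0) := by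
        rw [← ZMod.intCast_zmod_eq_zero_iff_dvd]
        simp only [eval_add, eval_mul, eval_C, eval_X]
        push_cast
        rfl
      exact and_congr_right fun _ => hiff
    rw [step1, card_int_box p hp.pos r (fun w : Fin r → ZMod p =>
      (∏ i, (aa * w i + bb)) * (aa * ((c : ZMod p) - ∑ i, w i) + bb) = 0)]
    refine Nat.card_congr (Equiv.subtypeEquiv
      (Equiv.piCongrRight fun _ => Equiv.addRight (av * bb)) fun w => ?_)
    simp only [Equiv.piCongrRight_apply, Pi.map_apply, Equiv.coe_addRight]
    rw [master w]
    simp [mul_eq_zero, pow_eq_zero_iff', haa, sub_eq_zero]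
  -- Step 2 : Nunits in terms of ZMod counting
  have hgcd : ∀ y : ℤ, (Int.gcd y p = 1 ↔ ((y : ZMod p)) ≠ 0) := by
    intro y
    rw [Ne, ZMod.intCast_zmod_eq_zero_iff_dvd, Int.natCast_dvd]
    have h : Int.gcd y p = Nat.gcd y.natAbs p := by
      simp [Int.gcd]
    rw [h]
    exact Nat.coprime_comm.trans (hp.coprime_iff_not_dvd)
  have hN : (Nunits r (c + k * b * ainv) p)
      = Nat.card {z : Fin r → ZMod p // (∀ i, z i ≠ 0) ∧ (∑ i, z i) = cc'} := by
    rw [Nunits]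
    have step2 : Nat.card {y : Fin r → ℤ //
        (∀ i, 0 ≤ y i ∧ y i < p ∧ Int.gcd (y i) p = 1) ∧
        (p : ℤ) ∣ (∑ i, y i) - (c + k * b * ainv)}
        = Nat.card {y : Fin r → ℤ //
        (∀ i, 0 ≤ y i ∧ y i < p) ∧
        (fun w : Fin r → ZMod p => (∀ i, w i ≠ 0) ∧ (∑ i, w i) = cc')
          (fun i => ((y i : ZMod p)))} := by
      refine Nat.card_congr (Equiv.subtypeEquivRight fun y => ?_)
      have hsum : ((p : ℤ) ∣ (∑ i, y i) - (c + k * b * ainv))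
          ↔ (∑ i, ((y i : ZMod p))) = cc' := by
        rw [← ZMod.intCast_zmod_eq_zero_iff_dvd]
        push_cast
        rw [sub_eq_zero, hcc']
        push_cast
        rfl
      constructor
      · rintro ⟨h1, h2⟩
        exact ⟨fun i => ⟨(h1 i).1, (h1 i).2.1⟩,
          fun i => (hgcd _).1 (h1 i).2.2, hsum.1 h2⟩
      · rintro ⟨h1, h2, h3⟩
        exact ⟨fun i => ⟨(h1 i).1, (h1 i).2, (hgcd _).2 (h2 i)⟩, hsum.2 h3⟩
    rw [step2, card_int_box p hp.pos r (fun w : Fin r → ZMod p =>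
      (∀ i, w i ≠ 0) ∧ (∑ i, w i) = cc')]
  -- Step 3 : counting in ZMod
  have hneg : ∀ z : Fin r → ZMod p,
      (¬((∏ i, z i) * (cc' - ∑ i, z i) = 0)) ↔ ((∀ i, z i ≠ 0) ∧ ¬((∑ i, z i) = cc')) := by
    intro z
    rw [mul_eq_zero, sub_eq_zero, Finset.prod_eq_zero_iff]
    simp [not_or, eq_comm]
  have e1 : Nat.card {z : Fin r → ZMod p // (∏ i, z i) * (cc' - ∑ i, z i) = 0}
      + Nat.card {z : Fin r → ZMod p // ¬((∏ i, z i) * (cc' - ∑ i, z i) = 0)} = p ^ r := by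
    rw [card_split']
    rw [Nat.card_eq_fintype_card, Fintype.card_fun, ZMod.card, Fintype.card_fin]
  have ecg : Nat.card {z : Fin r → ZMod p // ¬((∏ i, z i) * (cc' - ∑ i, z i) = 0)}
      = Nat.card {z : Fin r → ZMod p // (∀ i, z i ≠ 0) ∧ ¬((∑ i, z i) = cc')} :=
    Nat.card_congr (Equiv.subtypeEquivRight hneg)
  have e2 : Nat.card {z : Fin r → ZMod p // (∀ i, z i ≠ 0) ∧ (∑ i, z i) = cc'}
      + Nat.card {z : Fin r → ZMod p // (∀ i, z i ≠ 0) ∧ ¬((∑ i, z i) = cc')}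
      = (p - 1) ^ r := by
    rw [card_split (fun z : Fin r → ZMod p => ∀ i, z i ≠ 0)
      (fun z : Fin r → ZMod p => (∑ i, z i) = cc'), card_nonzero_tuples p hp r]
  -- Final arithmetic
  rw [hM, hN]
  have hp1 : 1 ≤ p := hp.one_le
  rw [ecg] at e1
  have e1' := congrArg (fun n : ℕ => (n : ℤ)) e1
  have e2' := congrArg (fun n : ℕ => (n : ℤ)) e2
  push_cast [Nat.cast_sub hp1] at e1' e2'
  linarith
end
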